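/- arXiv:2209.06591 — 5 statements merged into one kernel-verified Lean document; each statement's English description precedes it below -/
import Mathlib

section
/- A matroid M has a positive double circuit if and only if its dual M* has a positive coline. -/
open Set Matroid

namespace Paper

variable {α : Type*}

/-- A circuit of a matroid: a minimal dependent set. -/
def IsCircuit (M : Matroid α) (C : Set α) : Prop :=
  M.Dep C ∧ ∀ x ∈ C, M.Indep (C \ {x})

/-- The rank of a set: the largest cardinality of an independent subset. -/
noncomputable def rk (M : Matroid α) (X : Set α) : ℕ :=
  sSup {n : ℕ | ∃ I, I ⊆ X ∧ M.Indep I ∧ I.ncard = n}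

/-- A double circuit: a (finite) set `D` with `r(D) = |D| - 2` such that deleting any
single element does not decrease the rank. -/
def DoubleCircuit (M : Matroid α) (D : Set α) : Prop :=
  D ⊆ M.E ∧ D.Finite ∧ rk M D + 2 = D.ncard ∧ ∀ d ∈ D, rk M (D \ {d}) = rk M D

/-- `P` is the circuit partition of `D`: a partition of `D` into nonempty classes such
that the circuits of `M` contained in `D` are exactly the complements (in `D`) of the
classes. -/
def IsCircuitPartition (M : Matroid α) (D : Set α) (P : Set (Set α)) : Prop :=
  (∀ p ∈ P, p.Nonempty) ∧ (∀ p ∈ P, p ⊆ D) ∧ (∀ d ∈ D, ∃! p, p ∈ P ∧ d ∈ p) ∧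
    ∀ C, (IsCircuit M C ∧ C ⊆ D) ↔ ∃ p ∈ P, C = D \ p

/-- A positive double circuit: one whose circuit partition has strictly more singular
(size-one) classes than multiple classes. -/
def PositiveDoubleCircuit (M : Matroid α) (D : Set α) : Prop :=
  DoubleCircuit M D ∧ ∃ P, IsCircuitPartition M D P ∧
    {p ∈ P | p.ncard ≠ 1}.ncard < {p ∈ P | p.ncard = 1}.ncard

/-- A hyperplane (copoint): a maximal proper flat. -/
def IsHyperplane (M : Matroid α) (H : Set α) : Prop :=
  M.IsFlat H ∧ H ≠ M.E ∧ ∀ F, M.IsFlat F → H ⊂ F → F = M.E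

/-- A coline: a flat of codimension two. -/
def IsColine (M : Matroid α) (L : Set α) : Prop :=
  M.IsFlat L ∧ rk M L + 2 = rk M M.E

/-- `P` is the copoint partition of the coline `L`: a partition of `M.E \ L` such that
the hyperplanes containing `L` are exactly the sets `L ∪ p` for classes `p`. -/
def IsCopointPartition (M : Matroid α) (L : Set α) (P : Set (Set α)) : Prop :=
  (∀ p ∈ P, p.Nonempty) ∧ (∀ p ∈ P, p ⊆ M.E \ L) ∧ (∀ d ∈ M.E \ L, ∃! p, p ∈ P ∧ d ∈ p) ∧
    ∀ H, (IsHyperplane M H ∧ L ⊆ H) ↔ ∃ p ∈ P, H = L ∪ p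

/-- A positive coline: one whose copoint partition has strictly more singular (size-one)
classes than multiple classes. -/
def PositiveColine (M : Matroid α) (L : Set α) : Prop :=
  IsColine M L ∧ ∃ P, IsCopointPartition M L P ∧
    {p ∈ P | p.ncard ≠ 1}.ncard < {p ∈ P | p.ncard = 1}.ncard

/-- A simple matroid: no loops and no parallel pairs. -/
def SimpleM (M : Matroid α) : Prop :=
  (∀ e ∈ M.E, M.Indep {e}) ∧ ∀ e f, e ∈ M.E → f ∈ M.E → e ≠ f → M.Indep {e, f}

/-- A coloop: an element contained in every base. -/
def IsColoop (M : Matroid α) (e : α) : Prop :=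
  e ∈ M.E ∧ ∀ B, M.IsBase B → e ∈ B

open Classical in
/-- The permutation of `α` exchanging `e` and `f`. -/
noncomputable def swapMap (e f : α) (x : α) : α :=
  if x = e then f else if x = f then e else x

/-- `e` and `f` are clones in `M` if exchanging them is an automorphism of `M`. -/
def Clones (M : Matroid α) (e f : α) : Prop :=
  e ∈ M.E ∧ f ∈ M.E ∧ ∀ I, M.Indep I ↔ M.Indep (swapMap e f '' I)

/-- Contraction of a set, defined by duality with deletion. -/
noncomputable def contract (M : Matroid α) (C : Set α) : Matroid α := (M✶ ↾ (M.E \ C))✶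

/-- Deletion of a set. -/
noncomputable def delete (M : Matroid α) (D : Set α) : Matroid α := M ↾ (M.E \ D)

/-- `N` is a minor of `M`. -/
def IsMinorOf (N M : Matroid α) : Prop :=
  ∃ C D, C ⊆ M.E ∧ D ⊆ M.E ∧ Disjoint C D ∧ N = Paper.delete (contract M C) D


/-! ### Auxiliary rank theory -/

section Aux

variable {M : Matroid α} {X Y I C D H F L : Set α} {e x : α}

lemma rk_set_nonempty (M : Matroid α) (X : Set α) :
    {n : ℕ | ∃ I, I ⊆ X ∧ M.Indep I ∧ I.ncard = n}.Nonempty :=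
  ⟨0, ∅, empty_subset X, M.empty_indep, by simp⟩

lemma rk_set_bddAbove (M : Matroid α) [M.Finite] (X : Set α) :
    BddAbove {n : ℕ | ∃ I, I ⊆ X ∧ M.Indep I ∧ I.ncard = n} := by
  refine ⟨M.E.ncard, fun n hn => ?_⟩
  obtain ⟨I, -, hI, rfl⟩ := hn
  exact Set.ncard_le_ncard hI.subset_ground M.ground_finite

lemma rk_basis' [M.Finite] (h : M.IsBasis' I X) : rk M X = I.ncard := by
  have hIfin : I.Finite := M.ground_finite.subset h.indep.subset_ground
  refine le_antisymm (csSup_le (rk_set_nonempty M X) ?_)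
    (le_csSup (rk_set_bddAbove M X) ⟨I, h.subset, h.indep, rfl⟩)
  rintro n ⟨J, hJX, hJ, rfl⟩
  obtain ⟨I', hI', hJI'⟩ := hJ.subset_isBasis'_of_subset hJX
  have hI'fin : I'.Finite := M.ground_finite.subset hI'.indep.subset_ground
  have hcard : I'.ncard = I.ncard := by
    rw [Set.ncard_def, Set.ncard_def, hI'.encard_eq_encard h]
  exact hcard ▸ Set.ncard_le_ncard hJI' hI'fin

lemma rk_indep [M.Finite] (hI : M.Indep I) : rk M I = I.ncard :=
  rk_basis' hI.isBasis_self.isBasis'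

lemma rk_mono [M.Finite] (h : X ⊆ Y) : rk M X ≤ rk M Y :=
  csSup_le_csSup (rk_set_bddAbove M Y) (rk_set_nonempty M X)
    (fun n ⟨I, hIX, hI, hc⟩ => ⟨I, hIX.trans h, hI, hc⟩)

lemma rk_le_ncard [M.Finite] (hX : X.Finite) : rk M X ≤ X.ncard :=
  csSup_le (rk_set_nonempty M X)
    (fun n ⟨I, hIX, _, hc⟩ => hc ▸ Set.ncard_le_ncard hIX hX)

lemma rk_empty (M : Matroid α) [M.Finite] : rk M ∅ = 0 := by
  simpa using rk_indep M.empty_indep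

lemma rk_closure_eq [M.Finite] (hX : X ⊆ M.E) : rk M (M.closure X) = rk M X := by
  obtain ⟨I, hI⟩ := M.exists_isBasis' X
  rw [rk_basis' hI, rk_basis' hI.isBasis_closure_right.isBasis']

lemma mem_closure_iff_rk [M.Finite] (hX : X ⊆ M.E) (he : e ∈ M.E) :
    e ∈ M.closure X ↔ rk M (insert e X) = rk M X := by
  obtain ⟨I, hI⟩ := M.exists_isBasis' X
  have hclI : M.closure I = M.closure X := hI.closure_eq_closure
  constructor
  · intro h
    have hb : M.IsBasis I (insert e X) := by
      refine hI.indep.isBasis_of_subset_of_subset_closure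
        (hI.subset.trans (subset_insert _ _)) ?_
      rw [hclI]
      exact insert_subset h (M.subset_closure X hX)
    rw [rk_basis' hb.isBasis', rk_basis' hI]
  · intro h
    by_contra he'
    have heI : e ∉ I := fun hmem => he' (hclI ▸ M.mem_closure_of_mem hmem hI.indep.subset_ground)
    have hind : M.Indep (insert e I) := by
      rw [hI.indep.insert_indep_iff_of_notMem heI, hclI]
      exact ⟨he, he'⟩
    have hIfin : I.Finite := M.ground_finite.subset hI.indep.subset_ground
    have hle : (insert e I).ncard ≤ rk M (insert e X) := by
      rw [← rk_indep hind]
      exact rk_mono (insert_subset_insert hI.subset)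
    rw [Set.ncard_insert_of_notMem heI hIfin, h, rk_basis' hI] at hle
    omega

lemma rk_insert_le [M.Finite] : rk M (insert e X) ≤ rk M X + 1 := by
  obtain ⟨J, hJ⟩ := M.exists_isBasis' (insert e X)
  rw [rk_basis' hJ]
  have hJfin : J.Finite := M.ground_finite.subset hJ.indep.subset_ground
  have h2 : J \ {e} ⊆ X := by
    intro x hx
    rcases hJ.subset hx.1 with h | h
    · exact absurd h hx.2
    · exact h
  have h3 : (J \ {e}).ncard ≤ rk M X := by
    rw [← rk_indep (hJ.indep.subset diff_subset)]
    exact rk_mono h2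
  have h4 : J.ncard ≤ (J \ {e}).ncard + 1 := by
    by_cases he : e ∈ J
    · rw [Set.ncard_diff_singleton_of_mem he]
      have : 1 ≤ J.ncard := by
        exact (Set.ncard_pos hJfin).mpr ⟨e, he⟩
      omega
    · rw [Set.diff_singleton_eq_self he]; omega
  omega

lemma rk_le_rk_diff_singleton_add_one [M.Finite] : rk M X ≤ rk M (X \ {x}) + 1 := by
  by_cases hx : x ∈ X
  · have : X = insert x (X \ {x}) := by simp [hx]
    nth_rewrite 1 [this]
    exact rk_insert_le
  · rw [Set.diff_singleton_eq_self hx]; omega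

lemma rk_base [M.Finite] (hB : M.IsBase B) : rk M M.E = B.ncard :=
  rk_basis' hB.isBasis_ground.isBasis'

lemma rk_eq_rk_ground_iff [M.Finite] (hX : X ⊆ M.E) :
    rk M X = rk M M.E ↔ M.E ⊆ M.closure X := by
  constructor
  · intro h
    obtain ⟨I, hI⟩ := M.exists_isBasis' X
    obtain ⟨B, hB, hIB⟩ := hI.indep.exists_isBase_superset
    have hBfin : B.Finite := M.ground_finite.subset hB.subset_ground
    have hIB' : I = B := by
      refine Set.eq_of_subset_of_ncard_le hIB ?_ hBfin
      rw [← rk_base hB, ← h, rk_basis' hI]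
    rw [← hI.closure_eq_closure, hIB', hB.closure_eq]
  · intro h
    have hcl : M.closure X = M.E := (M.closure_subset_ground X).antisymm h
    rw [← rk_closure_eq hX, hcl]

lemma indep_iff_rk [M.Finite] (hX : X ⊆ M.E) : M.Indep X ↔ rk M X = X.ncard := by
  refine ⟨rk_indep, fun h => ?_⟩
  obtain ⟨I, hI⟩ := M.exists_isBasis' X
  have hXfin : X.Finite := M.ground_finite.subset hX
  have : X = I := by
    refine (Set.eq_of_subset_of_ncard_le hI.subset ?_ hXfin).symm
    rw [← rk_basis' hI, h]
  rw [this]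
  exact hI.indep

lemma flat_of_closure_eq (hX : X ⊆ M.E) (h : M.closure X = X) : M.IsFlat X := by
  refine ⟨fun I Y hIF hIY => ?_, hX⟩
  have := hIY.subset_closure
  rwa [hIF.closure_eq_closure, h] at this

lemma closure_flat' (M : Matroid α) (X : Set α) : M.IsFlat (M.closure X) :=
  flat_of_closure_eq (M.closure_subset_ground X) (M.closure_closure X)

lemma flat_iff_rk [M.Finite] (hF : F ⊆ M.E) :
    M.IsFlat F ↔ ∀ e ∈ M.E \ F, rk M (insert e F) ≠ rk M F := by
  constructor
  · rintro hflat e ⟨heE, heF⟩ hrk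
    exact heF (hflat.closure ▸ (mem_closure_iff_rk hF heE).mpr hrk)
  · intro h
    refine flat_of_closure_eq hF (subset_antisymm (fun x hx => ?_) (M.subset_closure F hF))
    have hxE : x ∈ M.E := mem_ground_of_mem_closure hx
    by_contra hxF
    exact h x ⟨hxE, hxF⟩ ((mem_closure_iff_rk hF hxE).mp hx)

/-- The rank formula for the dual matroid. -/
lemma dual_rk_formula [M.Finite] (hX : X ⊆ M.E) :
    rk M✶ X + rk M M.E = X.ncard + rk M (M.E \ X) := by
  obtain ⟨J, hJ⟩ := M.exists_isBasis' (M.E \ X)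
  obtain ⟨B, hB, hJB⟩ := hJ.indep.exists_isBase_superset
  have hBfin : B.Finite := M.ground_finite.subset hB.subset_ground
  have hXfin : X.Finite := M.ground_finite.subset hX
  have hJeq : B ∩ (M.E \ X) = J := by
    refine (hJ.eq_of_subset_indep (hB.indep.subset inter_subset_left)
      (subset_inter hJB hJ.subset) inter_subset_right).symm
  -- rk M✶ X = (X \ B).ncard
  have hdualrk : rk M✶ X = (X \ B).ncard := by
    refine le_antisymm (csSup_le (rk_set_nonempty M✶ X) ?_)
      (le_csSup (rk_set_bddAbove M✶ X) ⟨X \ B, diff_subset, ?_, rfl⟩)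
    · rintro n ⟨I, hIX, hI, rfl⟩
      obtain ⟨B', hB', hdisj⟩ := (Matroid.dual_indep_iff_exists (hIX.trans hX)).mp hI
      have hB'fin : B'.Finite := M.ground_finite.subset hB'.subset_ground
      have h1 : I ⊆ X \ B' := subset_diff.mpr ⟨hIX, hdisj⟩
      have h2 : (B' \ X).ncard ≤ (B \ X).ncard := by
        have hBX : B \ X = J := by
          rw [← hJeq]
          ext y
          simp only [mem_diff, mem_inter_iff]
          exact ⟨fun hy => ⟨hy.1, hB.subset_ground hy.1, hy.2⟩, fun hy => ⟨hy.1, hy.2.2⟩⟩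
        rw [hBX, ← rk_basis' hJ, ← rk_indep (hB'.indep.subset diff_subset)]
        refine rk_mono (fun y hy => ⟨hB'.subset_ground hy.1, hy.2⟩)
      have h3 : (B \ X).ncard + (B ∩ X).ncard = B.ncard :=
        (Set.diff_self_inter (s := B) (t := X)) ▸
          Set.ncard_diff_add_ncard_of_subset inter_subset_left hBfin
      have h4 : (B' \ X).ncard + (B' ∩ X).ncard = B'.ncard :=
        (Set.diff_self_inter (s := B') (t := X)) ▸
          Set.ncard_diff_add_ncard_of_subset inter_subset_left hB'fin
      have h5 : B.ncard = B'.ncard := hB.ncard_eq_ncard_of_isBase hB'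
      have h6 : (X \ B).ncard + (X ∩ B).ncard = X.ncard :=
        (Set.diff_self_inter (s := X) (t := B)) ▸
          Set.ncard_diff_add_ncard_of_subset inter_subset_left hXfin
      have h7 : (X \ B').ncard + (X ∩ B').ncard = X.ncard :=
        (Set.diff_self_inter (s := X) (t := B')) ▸
          Set.ncard_diff_add_ncard_of_subset inter_subset_left hXfin
      have h8 : (X ∩ B).ncard = (B ∩ X).ncard := by rw [inter_comm]
      have h9 : (X ∩ B').ncard = (B' ∩ X).ncard := by rw [inter_comm]
      have h10 : I.ncard ≤ (X \ B').ncard := Set.ncard_le_ncard h1 hXfin.diff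
      omega
    · exact (Matroid.dual_indep_iff_exists (diff_subset.trans hX)).mpr
        ⟨B, hB, disjoint_sdiff_left⟩
  have hrkE : rk M M.E = B.ncard := rk_base hB
  have hrkD : rk M (M.E \ X) = (B \ X).ncard := by
    have hBX : B \ X = J := by
      rw [← hJeq]
      ext y
      simp only [mem_diff, mem_inter_iff]
      exact ⟨fun hy => ⟨hy.1, hB.subset_ground hy.1, hy.2⟩, fun hy => ⟨hy.1, hy.2.2⟩⟩
    rw [hBX, rk_basis' hJ]
  have h3 : (B \ X).ncard + (B ∩ X).ncard = B.ncard :=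
    (Set.diff_self_inter (s := B) (t := X)) ▸
      Set.ncard_diff_add_ncard_of_subset inter_subset_left hBfin
  have h6 : (X \ B).ncard + (X ∩ B).ncard = X.ncard :=
    (Set.diff_self_inter (s := X) (t := B)) ▸
      Set.ncard_diff_add_ncard_of_subset inter_subset_left hXfin
  have h8 : (X ∩ B).ncard = (B ∩ X).ncard := by rw [inter_comm]
  omega

lemma dual_rk_ground [M.Finite] : rk M✶ M✶.E + rk M M.E = M.E.ncard := by
  have := dual_rk_formula (M := M) (X := M.E) Subset.rfl
  simpa [rk_empty] using this

lemma dual_rk_compl [M.Finite] (hD : D ⊆ M.E) :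
    rk M✶ (M.E \ D) + rk M M.E = (M.E \ D).ncard + rk M D := by
  have := dual_rk_formula (M := M) (X := M.E \ D) diff_subset
  rwa [diff_diff_cancel_left hD] at this

/-- Flatness of the complement in the dual, in terms of ranks. -/
lemma dual_flat_compl_iff [M.Finite] (hD : D ⊆ M.E) :
    M✶.IsFlat (M.E \ D) ↔ ∀ e ∈ D, rk M (D \ {e}) = rk M D := by
  have hgr : (M✶ : Matroid α).E = M.E := Matroid.dual_ground
  have hsub : M.E \ D ⊆ M✶.E := by rw [hgr]; exact diff_subset
  rw [flat_iff_rk hsub]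
  have hcompl : M✶.E \ (M.E \ D) = D := by rw [hgr, diff_diff_cancel_left hD]
  rw [hcompl]
  refine forall_congr' fun e => ?_
  refine imp_congr_right fun he => ?_
  have heE : e ∈ M.E := hD he
  have hins : insert e (M.E \ D) = M.E \ (D \ {e}) := by
    ext y
    simp only [mem_insert_iff, mem_diff, mem_singleton_iff]
    constructor
    · rintro (rfl | ⟨h1, h2⟩)
      · exact ⟨heE, fun h => (h.2 rfl).elim⟩
      · exact ⟨h1, fun h => h2 h.1⟩
    · rintro ⟨h1, h2⟩
      by_cases hy : y = e
      · exact Or.inl hy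
      · exact Or.inr ⟨h1, fun hyD => h2 ⟨hyD, hy⟩⟩
  rw [hins]
  have h1 := dual_rk_compl (M := M) ((diff_subset (s := D) (t := {e})).trans hD)
  have h2 := dual_rk_compl hD
  have h3 : rk M (D \ {e}) ≤ rk M D := rk_mono diff_subset
  have h4 : rk M D ≤ rk M (D \ {e}) + 1 := rk_le_rk_diff_singleton_add_one
  have h5 : (M.E \ (D \ {e})).ncard + (D \ {e}).ncard = M.E.ncard :=
    Set.ncard_diff_add_ncard_of_subset ((diff_subset (s := D) (t := {e})).trans hD)
      M.ground_finite
  have h6 : (M.E \ D).ncard + D.ncard = M.E.ncard :=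
    Set.ncard_diff_add_ncard_of_subset hD M.ground_finite
  have hDfin : D.Finite := M.ground_finite.subset hD
  have h7 : (D \ {e}).ncard + 1 = D.ncard := by
    rw [Set.ncard_diff_singleton_of_mem he]
    have : 1 ≤ D.ncard := by exact (Set.ncard_pos hDfin).mpr ⟨e, he⟩
    omega
  omega

/-- Rank characterisation of circuits. -/
lemma circuit_iff_rk [M.Finite] (hC : C ⊆ M.E) :
    IsCircuit M C ↔ rk M C + 1 = C.ncard ∧ ∀ x ∈ C, rk M (C \ {x}) = rk M C := by
  have hCfin : C.Finite := M.ground_finite.subset hC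
  constructor
  · rintro ⟨hdep, hmin⟩
    have hne : C.Nonempty := by
      rcases C.eq_empty_or_nonempty with rfl | h
      · exact absurd M.empty_indep hdep.1
      · exact h
    obtain ⟨x₀, hx₀⟩ := hne
    have hkey : ∀ x ∈ C, rk M (C \ {x}) + 1 = C.ncard := by
      intro x hx
      rw [rk_indep (hmin x hx), Set.ncard_diff_singleton_of_mem hx]
      have : 1 ≤ C.ncard := by exact (Set.ncard_pos hCfin).mpr ⟨x, hx⟩
      omega
    have hlt : rk M C < C.ncard := by
      refine lt_of_le_of_ne (rk_le_ncard hCfin) ?_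
      intro h
      exact hdep.1 ((indep_iff_rk hC).mpr h)
    have hge : ∀ x ∈ C, rk M (C \ {x}) ≤ rk M C := fun x _ => rk_mono diff_subset
    have h1 := hkey x₀ hx₀
    have h2 := hge x₀ hx₀
    refine ⟨by omega, fun x hx => ?_⟩
    have := hkey x hx
    have := hge x hx
    omega
  · rintro ⟨hrk, hmin⟩
    have hne : C.Nonempty := by
      rcases C.eq_empty_or_nonempty with rfl | h
      · simp [rk_empty] at hrk
      · exact h
    constructor
    · refine ⟨fun hind => ?_, hC⟩
      rw [rk_indep hind] at hrk
      omega
    · intro x hx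
      rw [indep_iff_rk ((diff_subset (s := C) (t := {x})).trans hC), hmin x hx,
        Set.ncard_diff_singleton_of_mem hx]
      omega

/-- Rank characterisation of hyperplanes. -/
lemma hyperplane_iff_rk {N : Matroid α} [N.Finite] (hH : H ⊆ N.E) :
    IsHyperplane N H ↔ N.IsFlat H ∧ rk N H + 1 = rk N N.E := by
  constructor
  · rintro ⟨hflat, hne, hmax⟩
    refine ⟨hflat, ?_⟩
    have hlt : rk N H < rk N N.E := by
      refine lt_of_le_of_ne (rk_mono hH) fun h => hne ?_
      have := (rk_eq_rk_ground_iff hH).mp h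
      rw [← hflat.closure]
      exact (N.closure_subset_ground H).antisymm this
    obtain ⟨e, heE, heH⟩ := exists_of_ssubset (ssubset_iff_subset_ne.mpr ⟨hH, hne⟩)
    have hF := hmax (N.closure (insert e H)) (closure_flat' N (insert e H)) ?_
    · have hrk : rk N (insert e H) = rk N N.E := by
        rw [← rk_closure_eq (insert_subset heE hH), hF]
      have := rk_insert_le (M := N) (e := e) (X := H)
      omega
    · refine ssubset_iff_subset_ne.mpr ⟨?_, fun h => heH ?_⟩
      · exact (subset_insert e H).trans (N.subset_closure _ (insert_subset heE hH))
      · have : e ∈ N.closure (insert e H) :=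
          N.mem_closure_of_mem (mem_insert e H) (insert_subset heE hH)
        rwa [← h] at this
  · rintro ⟨hflat, hrk⟩
    have hne : H ≠ N.E := fun h => by rw [h] at hrk; omega
    refine ⟨hflat, hne, fun F hF hssub => ?_⟩
    obtain ⟨e, heF, heH⟩ := exists_of_ssubset hssub
    have heE : e ∈ N.E := hF.subset_ground heF
    have hneq : rk N (insert e H) ≠ rk N H := by
      intro h
      exact heH (hflat.closure ▸ (mem_closure_iff_rk hH heE).mpr h)
    have h1 : rk N (insert e H) ≤ rk N H + 1 := rk_insert_le
    have h2 : rk N H ≤ rk N (insert e H) := rk_mono (subset_insert e H)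
    have h3 : rk N (insert e H) = rk N N.E := by omega
    have h4 : rk N F = rk N N.E := by
      have hle : rk N (insert e H) ≤ rk N F :=
        rk_mono (insert_subset heF hssub.subset)
      have := rk_mono (M := N) hF.subset_ground
      omega
    have := (rk_eq_rk_ground_iff hF.subset_ground).mp h4
    rw [← hF.closure]
    exact (N.closure_subset_ground F).antisymm this

/-- Duality between circuits and hyperplanes of the dual. -/
lemma dual_hyperplane_iff [M.Finite] (hC : C ⊆ M.E) :
    IsHyperplane M✶ (M.E \ C) ↔ IsCircuit M C := by
  have hsub : M.E \ C ⊆ M✶.E := by rw [Matroid.dual_ground]; exact diff_subset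
  rw [hyperplane_iff_rk hsub, circuit_iff_rk hC, dual_flat_compl_iff hC]
  have h1 := dual_rk_compl hC
  have h2 := dual_rk_ground (M := M)
  have h3 : (M.E \ C).ncard + C.ncard = M.E.ncard :=
    Set.ncard_diff_add_ncard_of_subset hC M.ground_finite
  have h4 : rk M C ≤ C.ncard := rk_le_ncard (M.ground_finite.subset hC)
  rw [and_comm]
  apply and_congr_left'
  constructor <;> intro h <;> omega

/-- Duality between double circuits and colines of the dual. -/
lemma dual_coline_iff [M.Finite] (hD : D ⊆ M.E) :
    IsColine M✶ (M.E \ D) ↔ DoubleCircuit M D := by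
  rw [IsColine, DoubleCircuit, dual_flat_compl_iff hD]
  have h1 := dual_rk_compl hD
  have h2 := dual_rk_ground (M := M)
  have h3 : (M.E \ D).ncard + D.ncard = M.E.ncard :=
    Set.ncard_diff_add_ncard_of_subset hD M.ground_finite
  have h4 : rk M D ≤ D.ncard := rk_le_ncard (M.ground_finite.subset hD)
  have hDfin : D.Finite := M.ground_finite.subset hD
  constructor
  · rintro ⟨hflat, hrk⟩
    exact ⟨hD, hDfin, by omega, hflat⟩
  · rintro ⟨-, -, hrk, hflat⟩
    exact ⟨hflat, by omega⟩

lemma compl_diff_eq (hD : D ⊆ M.E) {p : Set α} (hp : p ⊆ D) :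
    M.E \ (D \ p) = (M.E \ D) ∪ p := by
  rw [Set.diff_diff_right, Set.inter_eq_self_of_subset_right (hp.trans hD)]

/-- The circuit partition of `D` equals the copoint partition of its complement
in the dual. -/
lemma partition_transfer [M.Finite] (hD : D ⊆ M.E) (P : Set (Set α)) :
    IsCircuitPartition M D P ↔ IsCopointPartition M✶ (M.E \ D) P := by
  have hcompl : M✶.E \ (M.E \ D) = D := by
    rw [Matroid.dual_ground, diff_diff_cancel_left hD]
  rw [IsCircuitPartition, IsCopointPartition, hcompl]
  refine and_congr_right fun _ => and_congr_right fun hPD => and_congr_right fun _ => ?_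
  constructor
  · intro h4 H
    constructor
    · rintro ⟨hH, hLH⟩
      have hHE : H ⊆ M.E := hH.1.subset_ground
      set C := M.E \ H with hCdef
      have hCD : C ⊆ D := by
        intro y hy
        by_contra hyD
        exact hy.2 (hLH ⟨hy.1, hyD⟩)
      have hHC : M.E \ C = H := diff_diff_cancel_left hHE
      have hcirc : IsCircuit M C := (dual_hyperplane_iff (hCD.trans hD)).mp (hHC ▸ hH)
      obtain ⟨p, hpP, hCp⟩ := (h4 C).mp ⟨hcirc, hCD⟩
      refine ⟨p, hpP, ?_⟩
      rw [← hHC, hCp, compl_diff_eq hD (hPD p hpP)]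
    · rintro ⟨p, hpP, rfl⟩
      have hcirc : IsCircuit M (D \ p) ∧ D \ p ⊆ D := (h4 (D \ p)).mpr ⟨p, hpP, rfl⟩
      have hhyp : IsHyperplane M✶ (M.E \ (D \ p)) :=
        (dual_hyperplane_iff (diff_subset.trans hD)).mpr hcirc.1
      rw [compl_diff_eq hD (hPD p hpP)] at hhyp
      exact ⟨hhyp, subset_union_left⟩
  · intro h4 C
    constructor
    · rintro ⟨hcirc, hCD⟩
      have hCE : C ⊆ M.E := hCD.trans hD
      have hhyp : IsHyperplane M✶ (M.E \ C) := (dual_hyperplane_iff hCE).mpr hcirc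
      have hLH : M.E \ D ⊆ M.E \ C := diff_subset_diff_right hCD
      obtain ⟨p, hpP, hHp⟩ := (h4 (M.E \ C)).mp ⟨hhyp, hLH⟩
      refine ⟨p, hpP, ?_⟩
      have hC : C = M.E \ (M.E \ C) := (diff_diff_cancel_left hCE).symm
      rw [hC, hHp, ← Set.diff_diff, diff_diff_cancel_left hD]
    · rintro ⟨p, hpP, rfl⟩
      have hhyp : IsHyperplane M✶ ((M.E \ D) ∪ p) ∧ M.E \ D ⊆ (M.E \ D) ∪ p :=
        (h4 _).mpr ⟨p, hpP, rfl⟩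
      have := hhyp.1
      rw [← compl_diff_eq hD (hPD p hpP)] at this
      exact ⟨(dual_hyperplane_iff (diff_subset.trans hD)).mp this, diff_subset⟩

end Aux

/-- `M` has a positive double circuit iff `M✶` has a positive coline. -/
theorem positive_double_circuit_iff_dual_positive_coline
    {α : Type*} (M : Matroid α) [M.Finite] :
    (∃ D, PositiveDoubleCircuit M D) ↔ ∃ L, PositiveColine M✶ L := by
  constructor
  · rintro ⟨D, hDC, P, hP, hcount⟩
    have hD : D ⊆ M.E := hDC.1
    exact ⟨M.E \ D, (dual_coline_iff hD).mpr hDC, P, (partition_transfer hD P).mp hP, hcount⟩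
  · rintro ⟨L, hLcoline, P, hP, hcount⟩
    have hLE : L ⊆ M.E := hLcoline.1.subset_ground
    have hLL : M.E \ (M.E \ L) = L := diff_diff_cancel_left hLE
    refine ⟨M.E \ L, (dual_coline_iff diff_subset).mp (by rwa [hLL]), P,
      (partition_transfer diff_subset P).mpr (by rwa [hLL]), hcount⟩

end Paper
end

section
/- Every double circuit in a bicircular matroid has degree at most 6. -/
open Set Matroid

namespace Paper

variable {α : Type*}

universe u
variable {α : Type u}



/-- A multigraph on vertex type `V` with edges labelled by elements of `E ⊆ α`. -/
structure Multigraph (V : Type*) (α : Type*) where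
  E : Set α
  ends : α → Sym2 V

/-- The vertices incident with an edge set `D`. -/
def Multigraph.verts {V : Type*} (G : Multigraph V α) (D : Set α) : Set V :=
  {v | ∃ e ∈ D, v ∈ G.ends e}

/-- The degree of `v` in the subgraph with edge set `D` (loops count twice). -/
noncomputable def Multigraph.deg {V : Type*} (G : Multigraph V α) (D : Set α) (v : V) : ℕ :=
  {e ∈ D | v ∈ G.ends e ∧ ¬ (G.ends e).IsDiag}.ncard +
    2 * {e ∈ D | G.ends e = Sym2.diag v}.ncard

/-- `M` is the bicircular matroid of `G`: an edge set is independent iff every component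
of the induced subgraph contains at most one cycle; equivalently, iff every finite
subset `J` is incident with at least `|J|` vertices. -/
def IsBicircularOf {V : Type*} (G : Multigraph V α) (M : Matroid α) : Prop :=
  M.E = G.E ∧ ∀ I, M.Indep I ↔ I ⊆ G.E ∧ ∀ J ⊆ I, J.Finite → J.ncard ≤ (G.verts J).ncard

/-- `M` is a bicircular matroid. -/
def IsBicircular (M : Matroid α) : Prop :=
  ∃ (V : Type u) (G : Multigraph V α), IsBicircularOf G M

/-- `G` has girth at least five: every nonempty set of at most four edges is incident
with strictly more vertices than it has edges (i.e. contains no cycle). -/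
def GirthAtLeastFive {V : Type*} (G : Multigraph V α) : Prop :=
  ∀ J ⊆ G.E, J.Finite → J.Nonempty → J.ncard ≤ 4 → J.ncard < (G.verts J).ncard




section DegreeSix

private lemma sym2_setOf_finite {V : Type*} (s : Sym2 V) : {v : V | v ∈ s}.Finite := by
  induction s using Sym2.inductionOn with
  | _ x y =>
    have h : {v : V | v ∈ s(x, y)} = {x, y} := by
      ext v; simp [Sym2.mem_iff]
    rw [h]
    exact (Set.finite_singleton y).insert x

private lemma sym2_setOf_ncard_le {V : Type*} (s : Sym2 V) : {v : V | v ∈ s}.ncard ≤ 2 := by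
  induction s using Sym2.inductionOn with
  | _ x y =>
    have h : {v : V | v ∈ s(x, y)} = {x, y} := by
      ext v; simp [Sym2.mem_iff]
    rw [h]
    exact (Set.ncard_insert_le x {y}).trans (by simp)

private lemma verts_mono' {V : Type*} {G : Multigraph V α} {X Y : Set α}
    (h : X ⊆ Y) : G.verts X ⊆ G.verts Y := by
  rintro v ⟨e, he, hv⟩; exact ⟨e, h he, hv⟩

private lemma verts_finite' {V : Type*} {G : Multigraph V α} {X : Set α}
    (h : X.Finite) : (G.verts X).Finite := by
  have heq : G.verts X = ⋃ e ∈ X, {v : V | v ∈ G.ends e} := by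
    ext v; simp [Multigraph.verts]
  rw [heq]
  exact h.biUnion (fun e _ => sym2_setOf_finite _)

private lemma verts_union' {V : Type*} (G : Multigraph V α) (X Y : Set α) :
    G.verts (X ∪ Y) = G.verts X ∪ G.verts Y := by
  ext v
  constructor
  · rintro ⟨e, he | he, hv⟩
    · exact Or.inl ⟨e, he, hv⟩
    · exact Or.inr ⟨e, he, hv⟩
  · rintro (⟨e, he, hv⟩ | ⟨e, he, hv⟩)
    · exact ⟨e, Or.inl he, hv⟩
    · exact ⟨e, Or.inr he, hv⟩

end DegreeSix

/-- every double circuit in a bicircular matroid has degree at most `6`. -/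
theorem bicircular_double_circuit_degree_le_six {α : Type u} (M : Matroid α)
    (hM : IsBicircular M) (D : Set α) (P : Set (Set α))
    (hD : DoubleCircuit M D) (hP : IsCircuitPartition M D P) :
    P.ncard ≤ 6 := by
  classical
  by_contra hk6
  push_neg at hk6
  obtain ⟨V, G, hGE, hGI⟩ := hM
  obtain ⟨hDE, hDfin, hrkD, hrkDel⟩ := hD
  obtain ⟨hPne, hPsub, hPuniq, hPcirc⟩ := hP
  set n := D.ncard with hn
  -- P is finite
  have hPfin : P.Finite := by
    by_contra hinf
    rw [Set.Infinite.ncard hinf] at hk6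
    omega
  -- basic facts about the partition
  have hdisj : ∀ p ∈ P, ∀ q ∈ P, p ≠ q → p ∩ q = ∅ := by
    intro p hp q hq hne
    by_contra h
    obtain ⟨d, hdp, hdq⟩ := Set.nonempty_iff_ne_empty.mpr h
    obtain ⟨r, -, hr⟩ := hPuniq d (hPsub p hp hdp)
    exact hne ((hr p ⟨hp, hdp⟩).trans (hr q ⟨hq, hdq⟩).symm)
  have hcover : ∀ d ∈ D, ∃ p ∈ P, d ∈ p := by
    intro d hd
    obtain ⟨p, ⟨hp, hdp⟩, -⟩ := hPuniq d hd
    exact ⟨p, hp, hdp⟩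
  have hcirc : ∀ p ∈ P, IsCircuit M (D \ p) :=
    fun p hp => ((hPcirc (D \ p)).mpr ⟨p, hp, rfl⟩).1
  -- Hall-type bounds
  have hIndle : ∀ I : Set α, M.Indep I → I.Finite → I.ncard ≤ (G.verts I).ncard :=
    fun I hI hfin => ((hGI I).1 hI).2 I Subset.rfl hfin
  have hrkle : ∀ X : Set α, X.Finite → rk M X ≤ (G.verts X).ncard := by
    intro X hfin
    have hne : {m : ℕ | ∃ I, I ⊆ X ∧ M.Indep I ∧ I.ncard = m}.Nonempty :=
      ⟨0, ∅, Set.empty_subset X, M.empty_indep, Set.ncard_empty α⟩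
    refine csSup_le hne ?_
    rintro m ⟨I, hIX, hI, rfl⟩
    exact (hIndle I hI (hfin.subset hIX)).trans
      (Set.ncard_le_ncard (verts_mono' hIX) (verts_finite' hfin))
  -- circuits have exactly one fewer vertex than edges
  have hCircF : ∀ C : Set α, IsCircuit M C → C.Finite →
      (G.verts C).ncard + 1 = C.ncard := by
    intro C hC hfin
    obtain ⟨hdep, hmin⟩ := hC
    have hCne : C.Nonempty := by
      rcases C.eq_empty_or_nonempty with h | h
      · exact absurd (h ▸ M.empty_indep) hdep.not_indep
      · exact h
    obtain ⟨x, hx⟩ := hCne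
    have h1 : C.ncard ≤ (G.verts C).ncard + 1 := by
      have hle := hIndle _ (hmin x hx) (hfin.subset Set.diff_subset)
      have h2 : (C \ {x}).ncard + 1 = C.ncard :=
        Set.ncard_diff_singleton_add_one hx hfin
      have h3 : (G.verts (C \ {x})).ncard ≤ (G.verts C).ncard :=
        Set.ncard_le_ncard (verts_mono' Set.diff_subset) (verts_finite' hfin)
      omega
    have h4 : (G.verts C).ncard < C.ncard := by
      by_contra hge
      push_neg at hge
      apply hdep.not_indep
      rw [hGI]
      refine ⟨by rw [← hGE]; exact hdep.subset_ground, ?_⟩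
      intro J hJ hJfin
      rcases hJ.eq_or_ssubset with rfl | hss
      · exact hge
      · obtain ⟨y, hyC, hyJ⟩ := Set.exists_of_ssubset hss
        exact hIndle J ((hmin y hyC).subset (Set.subset_diff_singleton hJ hyJ)) hJfin
    omega
  -- two distinct classes
  have h2le : 1 < P.ncard := by omega
  obtain ⟨p₀, q₀, hp₀, hq₀, hpq⟩ := (Set.one_lt_ncard_iff hPfin).mp h2le
  -- |verts D| + 2 = n
  have hVfin : (G.verts D).Finite := verts_finite' hDfin
  have hfD : (G.verts D).ncard + 2 = n := by
    have hge : rk M D ≤ (G.verts D).ncard := hrkle D hDfin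
    have hfinCp : (D \ p₀).Finite := hDfin.subset Set.diff_subset
    have hfinCq : (D \ q₀).Finite := hDfin.subset Set.diff_subset
    have hfp := hCircF _ (hcirc p₀ hp₀) hfinCp
    have hfq := hCircF _ (hcirc q₀ hq₀) hfinCq
    have hDeq : (D \ p₀) ∪ (D \ q₀) = D := by
      rw [← Set.diff_inter, hdisj p₀ hp₀ q₀ hq₀ hpq, Set.diff_empty]
    have hvu : G.verts D = G.verts (D \ p₀) ∪ G.verts (D \ q₀) := by
      conv_lhs => rw [← hDeq]
      exact verts_union' G _ _
    obtain ⟨z, hz⟩ := hPne q₀ hq₀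
    have hzC : z ∈ D \ p₀ := by
      refine ⟨hPsub q₀ hq₀ hz, fun hzp => ?_⟩
      have hzmem : z ∈ p₀ ∩ q₀ := ⟨hzp, hz⟩
      rw [hdisj p₀ hp₀ q₀ hq₀ hpq] at hzmem
      exact hzmem
    have hIint : M.Indep ((D \ p₀) ∩ (D \ q₀)) := by
      refine ((hcirc p₀ hp₀).2 z hzC).subset
        (Set.subset_diff_singleton Set.inter_subset_left ?_)
      intro hmem
      exact hmem.2.2 hz
    have hint_le : ((D \ p₀) ∩ (D \ q₀)).ncard
        ≤ (G.verts (D \ p₀) ∩ G.verts (D \ q₀)).ncard := by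
      refine (hIndle _ hIint (hfinCp.subset Set.inter_subset_left)).trans
        (Set.ncard_le_ncard ?_ ((verts_finite' hfinCp).subset Set.inter_subset_left))
      exact Set.subset_inter (verts_mono' Set.inter_subset_left)
        (verts_mono' Set.inter_subset_right)
    have hU1 := Set.ncard_union_add_ncard_inter (G.verts (D \ p₀)) (G.verts (D \ q₀))
      (verts_finite' hfinCp) (verts_finite' hfinCq)
    have hU2 := Set.ncard_union_add_ncard_inter (D \ p₀) (D \ q₀) hfinCp hfinCq
    rw [hDeq] at hU2
    have hge' : rk M D ≤ (G.verts (D \ p₀) ∪ G.verts (D \ q₀)).ncard := by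
      rw [← hvu]; exact hge
    rw [hvu]
    omega
  -- every vertex of D meets at least two edges of D
  have hdeg2 : ∀ v ∈ G.verts D, ∀ e₀ ∈ D, v ∈ G.ends e₀ →
      ∃ e₁ ∈ D, e₁ ≠ e₀ ∧ v ∈ G.ends e₁ := by
    intro v hv e₀ he₀ hve
    by_contra hno
    push_neg at hno
    have hsub : G.verts (D \ {e₀}) ⊆ G.verts D \ {v} := by
      rintro w ⟨e, ⟨heD, hee⟩, hw⟩
      refine ⟨⟨e, heD, hw⟩, ?_⟩
      rintro rfl
      exact hno e heD (fun h => hee h) hw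
    have h1 : rk M (D \ {e₀}) ≤ (G.verts (D \ {e₀})).ncard :=
      hrkle _ (hDfin.subset Set.diff_subset)
    rw [hrkDel e₀ he₀] at h1
    have h2 : (G.verts (D \ {e₀})).ncard ≤ (G.verts D \ {v}).ncard :=
      Set.ncard_le_ncard hsub (hVfin.subset Set.diff_subset)
    have h3 : (G.verts D \ {v}).ncard + 1 = (G.verts D).ncard :=
      Set.ncard_diff_singleton_add_one hv hVfin
    omega
  -- every vertex of a circuit D \ p meets at least two edges of it
  have hcdeg2 : ∀ p ∈ P, ∀ v ∈ G.verts (D \ p),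
      ∃ e₁ ∈ D \ p, ∃ e₂ ∈ D \ p, e₁ ≠ e₂ ∧ v ∈ G.ends e₁ ∧ v ∈ G.ends e₂ := by
    intro p hp v hv
    obtain ⟨e₁, he₁, hv₁⟩ := hv
    by_contra hno
    push_neg at hno
    have hCfin : (D \ p).Finite := hDfin.subset Set.diff_subset
    have hsub : G.verts ((D \ p) \ {e₁}) ⊆ G.verts (D \ p) \ {v} := by
      rintro w ⟨e, ⟨heC, hee⟩, hw⟩
      refine ⟨⟨e, heC, hw⟩, ?_⟩
      rintro rfl
      exact hno e₁ he₁ e heC (fun h => hee h.symm) hv₁ hw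
    have hind := (hcirc p hp).2 e₁ he₁
    have h1 : ((D \ p) \ {e₁}).ncard ≤ (G.verts ((D \ p) \ {e₁})).ncard :=
      hIndle _ hind (hCfin.subset Set.diff_subset)
    have h2 : (G.verts ((D \ p) \ {e₁})).ncard ≤ (G.verts (D \ p) \ {v}).ncard :=
      Set.ncard_le_ncard hsub ((verts_finite' hCfin).subset Set.diff_subset)
    have h3 : (G.verts (D \ p) \ {v}).ncard + 1 = (G.verts (D \ p)).ncard :=
      Set.ncard_diff_singleton_add_one ⟨e₁, he₁, hv₁⟩ (verts_finite' hCfin)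
    have h4 : ((D \ p) \ {e₁}).ncard + 1 = (D \ p).ncard :=
      Set.ncard_diff_singleton_add_one he₁ hCfin
    have h5 := hCircF _ (hcirc p hp) hCfin
    omega
  -- Finset setup
  set Df : Finset α := hDfin.toFinset with hDfdef
  set Vf : Finset V := hVfin.toFinset with hVfdef
  set Pf : Finset (Set α) := hPfin.toFinset with hPfdef
  have hmemD : ∀ e, e ∈ Df ↔ e ∈ D := fun e => Set.Finite.mem_toFinset _
  have hmemV : ∀ v, v ∈ Vf ↔ v ∈ G.verts D := fun v => Set.Finite.mem_toFinset _
  have hmemP : ∀ p, p ∈ Pf ↔ p ∈ P := fun p => Set.Finite.mem_toFinset _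
  have hcardD : Df.card = n := (Set.ncard_eq_toFinset_card D hDfin).symm
  have hcardV : Vf.card = (G.verts D).ncard :=
    (Set.ncard_eq_toFinset_card _ hVfin).symm
  have hcardP : Pf.card = P.ncard := (Set.ncard_eq_toFinset_card P hPfin).symm
  -- double counting of incidences
  have hsum_comm : ∑ v ∈ Vf, (Df.filter (fun e => v ∈ G.ends e)).card
      = ∑ e ∈ Df, (Vf.filter (fun v => v ∈ G.ends e)).card := by
    simp only [Finset.card_filter]
    exact Finset.sum_comm
  have hedge2 : ∀ e : α, (Vf.filter (fun v => v ∈ G.ends e)).card ≤ 2 := by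
    intro e
    have h1 : ((Vf.filter (fun v => v ∈ G.ends e)) : Set V) ⊆ {v : V | v ∈ G.ends e} := by
      intro v hv
      exact (Finset.mem_filter.mp (Finset.mem_coe.mp hv)).2
    calc (Vf.filter (fun v => v ∈ G.ends e)).card
        = ((Vf.filter (fun v => v ∈ G.ends e) : Finset V) : Set V).ncard :=
          (Set.ncard_coe_finset _).symm
      _ ≤ {v : V | v ∈ G.ends e}.ncard := Set.ncard_le_ncard h1 (sym2_setOf_finite _)
      _ ≤ 2 := sym2_setOf_ncard_le _
  have htot : ∑ v ∈ Vf, (Df.filter (fun e => v ∈ G.ends e)).card ≤ 2 * n := by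
    rw [hsum_comm]
    calc ∑ e ∈ Df, (Vf.filter (fun v => v ∈ G.ends e)).card
        ≤ ∑ _e ∈ Df, 2 := Finset.sum_le_sum (fun e _ => hedge2 e)
      _ = 2 * n := by rw [Finset.sum_const, smul_eq_mul, hcardD, mul_comm]
  -- vertex degree lower bounds
  have hι2 : ∀ v ∈ Vf, 2 ≤ (Df.filter (fun e => v ∈ G.ends e)).card := by
    intro v hv
    rw [hmemV] at hv
    obtain ⟨e₀, he₀, hv₀⟩ := hv
    obtain ⟨e₁, he₁, hne, hv₁⟩ := hdeg2 v ⟨e₀, he₀, hv₀⟩ e₀ he₀ hv₀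
    have hss : ({e₁, e₀} : Finset α) ⊆ Df.filter (fun e => v ∈ G.ends e) := by
      intro x hx
      rcases Finset.mem_insert.mp hx with rfl | hx
      · exact Finset.mem_filter.mpr ⟨(hmemD _).mpr he₁, hv₁⟩
      · rw [Finset.mem_singleton] at hx
        subst hx
        exact Finset.mem_filter.mpr ⟨(hmemD _).mpr he₀, hv₀⟩
    calc 2 = ({e₁, e₀} : Finset α).card := by
          rw [Finset.card_insert_of_notMem (by simpa using hne), Finset.card_singleton]
      _ ≤ _ := Finset.card_le_card hss
  have hι3 : ∀ v ∈ Vf, (∀ p ∈ P, v ∈ G.verts (D \ p)) →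
      3 ≤ (Df.filter (fun e => v ∈ G.ends e)).card := by
    intro v hv hU
    rw [hmemV] at hv
    obtain ⟨e₀, he₀, hv₀⟩ := hv
    obtain ⟨p, hp, hep⟩ := hcover e₀ he₀
    obtain ⟨e₁, he₁, e₂, he₂, hne, hv₁, hv₂⟩ := hcdeg2 p hp v (hU p hp)
    have h10 : e₁ ≠ e₀ := fun h => he₁.2 (h ▸ hep)
    have h20 : e₂ ≠ e₀ := fun h => he₂.2 (h ▸ hep)
    have hss : ({e₁, e₂, e₀} : Finset α) ⊆ Df.filter (fun e => v ∈ G.ends e) := by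
      intro x hx
      rcases Finset.mem_insert.mp hx with rfl | hx
      · exact Finset.mem_filter.mpr ⟨(hmemD _).mpr he₁.1, hv₁⟩
      rcases Finset.mem_insert.mp hx with rfl | hx
      · exact Finset.mem_filter.mpr ⟨(hmemD _).mpr he₂.1, hv₂⟩
      rw [Finset.mem_singleton] at hx
      subst hx
      exact Finset.mem_filter.mpr ⟨(hmemD _).mpr he₀, hv₀⟩
    calc 3 = ({e₁, e₂, e₀} : Finset α).card := by
          rw [Finset.card_insert_of_notMem (by simp [hne, h10]),
            Finset.card_insert_of_notMem (by simpa using h20), Finset.card_singleton]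
      _ ≤ _ := Finset.card_le_card hss
  -- the set U of universal vertices
  have hUcard : (Vf.filter (fun v => ∀ p ∈ P, v ∈ G.verts (D \ p))).card ≤ 4 := by
    have hsplit : ∑ v ∈ Vf, (2 + if (∀ p ∈ P, v ∈ G.verts (D \ p)) then 1 else 0)
        ≤ ∑ v ∈ Vf, (Df.filter (fun e => v ∈ G.ends e)).card := by
      refine Finset.sum_le_sum ?_
      intro v hv
      by_cases h : ∀ p ∈ P, v ∈ G.verts (D \ p)
      · rw [if_pos h]
        have := hι3 v hv h
        omega
      · rw [if_neg h]
        have := hι2 v hv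
        omega
    rw [Finset.sum_add_distrib, Finset.sum_const, smul_eq_mul, ← Finset.card_filter] at hsplit
    have := htot
    rw [hcardV] at hsplit
    omega
  -- partition counting
  have hDbi : Df = Pf.biUnion (fun p => Df.filter (fun e => e ∈ p)) := by
    ext e
    simp only [Finset.mem_biUnion, Finset.mem_filter, hmemP]
    constructor
    · intro he
      obtain ⟨p, hp, hep⟩ := hcover e ((hmemD e).mp he)
      exact ⟨p, hp, he, hep⟩
    · rintro ⟨p, hp, he, hep⟩
      exact he
  have hdisjf : ∀ p ∈ Pf, ∀ q ∈ Pf, p ≠ q →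
      Disjoint (Df.filter (fun e => e ∈ p)) (Df.filter (fun e => e ∈ q)) := by
    intro p hp q hq hne
    rw [Finset.disjoint_left]
    intro e hep heq
    have hmem : e ∈ p ∩ q := ⟨(Finset.mem_filter.mp hep).2, (Finset.mem_filter.mp heq).2⟩
    rw [hdisj p ((hmemP p).mp hp) q ((hmemP q).mp hq) hne] at hmem
    exact hmem
  have hsumP : ∑ p ∈ Pf, (Df.filter (fun e => e ∈ p)).card = n := by
    rw [← Finset.card_biUnion hdisjf, ← hDbi, hcardD]
  have hpcard : ∀ p ∈ P, (Df.filter (fun e => e ∈ p)).card = p.ncard := by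
    intro p hp
    have hset : ((Df.filter (fun e => e ∈ p)) : Set α) = p := by
      ext e
      simp only [Finset.coe_filter, Set.mem_setOf_eq, hmemD]
      exact ⟨fun h => h.2, fun h => ⟨hPsub p hp h, h⟩⟩
    rw [← Set.ncard_coe_finset, hset]
  -- the W-sets
  have hWcard : ∀ p ∈ P, (Vf.filter (fun v => v ∉ G.verts (D \ p))).card + 1
      = (Df.filter (fun e => e ∈ p)).card := by
    intro p hp
    have hfinC : (D \ p).Finite := hDfin.subset Set.diff_subset
    have h1 := hCircF _ (hcirc p hp) hfinC
    have h2 : (D \ p).ncard + p.ncard = n :=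
      Set.ncard_diff_add_ncard_of_subset (hPsub p hp) hDfin
    have hWset : ((Vf.filter (fun v => v ∉ G.verts (D \ p))) : Set V)
        = G.verts D \ G.verts (D \ p) := by
      ext v
      simp only [Finset.coe_filter, Set.mem_setOf_eq, hmemV, Set.mem_diff]
    have h3 : (G.verts D \ G.verts (D \ p)).ncard + (G.verts (D \ p)).ncard
        = (G.verts D).ncard :=
      Set.ncard_diff_add_ncard_of_subset (verts_mono' Set.diff_subset) hVfin
    have h4 : (Vf.filter (fun v => v ∉ G.verts (D \ p))).card
        = (G.verts D \ G.verts (D \ p)).ncard := by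
      rw [← hWset, Set.ncard_coe_finset]
    have h5 := hpcard p hp
    omega
  have hWdisj : ∀ p ∈ Pf, ∀ q ∈ Pf, p ≠ q →
      Disjoint (Vf.filter (fun v => v ∉ G.verts (D \ p)))
        (Vf.filter (fun v => v ∉ G.verts (D \ q))) := by
    intro p hp q hq hne
    rw [Finset.disjoint_left]
    intro v hvp hvq
    obtain ⟨hvV, hnp⟩ := Finset.mem_filter.mp hvp
    obtain ⟨-, hnq⟩ := Finset.mem_filter.mp hvq
    obtain ⟨e, heD, hve⟩ := (hmemV v).mp hvV
    have hep : e ∈ p := by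
      by_contra h
      exact hnp ⟨e, ⟨heD, h⟩, hve⟩
    have heq : e ∈ q := by
      by_contra h
      exact hnq ⟨e, ⟨heD, h⟩, hve⟩
    have hmem : e ∈ p ∩ q := ⟨hep, heq⟩
    rw [hdisj p ((hmemP p).mp hp) q ((hmemP q).mp hq) hne] at hmem
    exact hmem
  -- Vf splits into Uf and the union of the W-sets
  have hVsplit : (Vf.filter (fun v => ∀ p ∈ P, v ∈ G.verts (D \ p))).card + (Pf.biUnion
      (fun p => Vf.filter (fun v => v ∉ G.verts (D \ p)))).card = Vf.card := by
    have hneg : Vf.filter (fun v => ¬ ∀ p ∈ P, v ∈ G.verts (D \ p))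
        = Pf.biUnion (fun p => Vf.filter (fun v => v ∉ G.verts (D \ p))) := by
      ext v
      simp only [Finset.mem_filter, Finset.mem_biUnion, hmemP, not_forall]
      constructor
      · rintro ⟨hvV, p, hp, hnp⟩
        exact ⟨p, hp, hvV, hnp⟩
      · rintro ⟨p, hp, hvV, hnp⟩
        exact ⟨hvV, p, hp, hnp⟩
    rw [← hneg]
    exact Finset.card_filter_add_card_filter_not _
  have hbiW : (Pf.biUnion (fun p => Vf.filter (fun v => v ∉ G.verts (D \ p)))).card
      = ∑ p ∈ Pf, (Vf.filter (fun v => v ∉ G.verts (D \ p))).card :=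
    Finset.card_biUnion hWdisj
  have hsumW : ∑ p ∈ Pf, ((Vf.filter (fun v => v ∉ G.verts (D \ p))).card + 1) = n := by
    rw [← hsumP]
    exact Finset.sum_congr rfl (fun p hp => hWcard p ((hmemP p).mp hp))
  rw [Finset.sum_add_distrib, Finset.sum_const, smul_eq_mul, mul_one, hcardP] at hsumW
  rw [hcardV] at hVsplit
  omega


end Paper
end

section
/- Let G be a multigraph and D a double circuit of the bicircular matroid B(G). Then the subgraph G[D] induced by D has no vertices of degree 1, and has at most 4 vertices of degree at least 3. -/
open Set Matroid

namespace Paper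

variable {α : Type*}

universe u
variable {α : Type u}



section Aux

variable {α : Type u} {V : Type*}

lemma aux_bddAbove (M : Matroid α) {X : Set α} (hX : X.Finite) :
    BddAbove {n : ℕ | ∃ I, I ⊆ X ∧ M.Indep I ∧ I.ncard = n} := by
  refine ⟨X.ncard, ?_⟩
  rintro n ⟨J, hJX, _, rfl⟩
  exact Set.ncard_le_ncard hJX hX

lemma aux_indep_ncard_le_rk {M : Matroid α} {X I : Set α} (hX : X.Finite)
    (hIX : I ⊆ X) (hI : M.Indep I) : I.ncard ≤ rk M X :=
  le_csSup (aux_bddAbove M hX) ⟨I, hIX, hI, rfl⟩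

lemma aux_exists_rk_witness (M : Matroid α) {X : Set α} (hX : X.Finite) :
    ∃ I, I ⊆ X ∧ M.Indep I ∧ I.ncard = rk M X := by
  have hne : {n : ℕ | ∃ I, I ⊆ X ∧ M.Indep I ∧ I.ncard = n}.Nonempty :=
    ⟨0, ∅, empty_subset X, M.empty_indep, by simp⟩
  exact Nat.sSup_mem hne (aux_bddAbove M hX)

lemma aux_rk_le {M : Matroid α} {X : Set α}
    (h : ∀ n ∈ {n : ℕ | ∃ I, I ⊆ X ∧ M.Indep I ∧ I.ncard = n}, n ≤ m) : rk M X ≤ m := by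
  have hne : {n : ℕ | ∃ I, I ⊆ X ∧ M.Indep I ∧ I.ncard = n}.Nonempty :=
    ⟨0, ∅, empty_subset X, M.empty_indep, by simp⟩
  exact csSup_le hne h

lemma aux_verts_mono (G : Multigraph V α) {A B : Set α} (h : A ⊆ B) :
    G.verts A ⊆ G.verts B := by
  rintro v ⟨e, heA, hve⟩
  exact ⟨e, h heA, hve⟩

lemma aux_sym2_mem_finite (z : Sym2 V) : {v : V | v ∈ z}.Finite := by
  induction z using Sym2.ind with
  | _ a b =>
    apply Set.Finite.subset ((Set.finite_singleton b).insert a)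
    intro v hv
    rcases Sym2.mem_iff.mp hv with rfl | rfl
    · exact Set.mem_insert _ _
    · exact Set.mem_insert_of_mem _ rfl

lemma aux_verts_finite (G : Multigraph V α) {A : Set α} (hA : A.Finite) :
    (G.verts A).Finite := by
  have : G.verts A = ⋃ e ∈ A, {v | v ∈ G.ends e} := by
    ext v; simp [Multigraph.verts]
  rw [this]
  exact hA.biUnion (fun e _ => aux_sym2_mem_finite (G.ends e))

lemma aux_eq_diag_of_isDiag_of_mem {z : Sym2 V} {v : V} (h : z.IsDiag) (hv : v ∈ z) :
    z = Sym2.diag v := by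
  induction z using Sym2.ind with
  | _ a b =>
    rw [Sym2.mk_isDiag_iff] at h
    rcases Sym2.mem_iff.mp hv with rfl | rfl
    · rw [← h]; rfl
    · rw [h]; rfl

end Aux

/-- if `D` is a double circuit of the bicircular matroid of `G`, then the
subgraph `G[D]` has no vertices of degree one, and at most four vertices of
degree at least three. -/
theorem bicircular_double_circuit_degrees {α : Type u} {V : Type*}
    (G : Multigraph V α) (M : Matroid α) (hGM : IsBicircularOf G M)
    (D : Set α) (hD : DoubleCircuit M D) :
    (∀ v : V, G.deg D v ≠ 1) ∧
      {v : V | 3 ≤ G.deg D v}.Finite ∧ {v : V | 3 ≤ G.deg D v}.ncard ≤ 4 := by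
  classical
  obtain ⟨hDE, hDfin, hrk, hdel⟩ := hD
  have hEG : M.E = G.E := hGM.1
  have hWfin : (G.verts D).Finite := aux_verts_finite G hDfin
  -- Part 1: no vertex of degree 1
  have h1 : ∀ v : V, G.deg D v ≠ 1 := by
    intro v hv
    set A := {e ∈ D | v ∈ G.ends e ∧ ¬ (G.ends e).IsDiag} with hA
    set B := {e ∈ D | G.ends e = Sym2.diag v} with hB
    have hAfin : A.Finite := hDfin.subset (fun e he => he.1)
    have hBfin : B.Finite := hDfin.subset (fun e he => he.1)
    have hdeg : A.ncard + 2 * B.ncard = 1 := hv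
    have hB0 : B = ∅ := by
      have : B.ncard = 0 := by omega
      exact (Set.ncard_eq_zero hBfin).mp this
    have hA1 : A.ncard = 1 := by omega
    obtain ⟨d, hdA⟩ := Set.ncard_eq_one.mp hA1
    have hdmem : d ∈ A := by rw [hdA]; exact rfl
    have hdD : d ∈ D := hdmem.1
    have hvd : v ∈ G.ends d := hdmem.2.1
    have huniq : ∀ e ∈ D, v ∈ G.ends e → e = d := by
      intro e heD hve
      by_cases hdiag : (G.ends e).IsDiag
      · exfalso
        have heB : e ∈ B := ⟨heD, aux_eq_diag_of_isDiag_of_mem hdiag hve⟩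
        rw [hB0] at heB
        exact heB
      · have heA : e ∈ A := ⟨heD, hve, hdiag⟩
        rw [hdA] at heA
        exact heA
    obtain ⟨I, hID, hIindep, hIcard⟩ := aux_exists_rk_witness M (hDfin.diff : (D \ {d}).Finite)
    have hdnotI : d ∉ I := fun h => (hID h).2 rfl
    have hIfin : I.Finite := (hDfin.diff : (D \ {d}).Finite).subset hID
    have hIchar := (hGM.2 I).mp hIindep
    have hnew : M.Indep (insert d I) := by
      rw [hGM.2]
      constructor
      · rintro e (rfl | he)
        · exact hEG ▸ hDE hdD
        · exact hIchar.1 he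
      · intro J hJ hJfin
        by_cases hdJ : d ∈ J
        · have hJ' : J \ {d} ⊆ I := by
            rintro x ⟨hxJ, hxd⟩
            rcases hJ hxJ with rfl | hx
            · exact absurd rfl hxd
            · exact hx
          have hv_not : v ∉ G.verts (J \ {d}) := by
            rintro ⟨e, heJ, hve⟩
            have heD : e ∈ D := (hID (hJ' heJ)).1
            exact heJ.2 (huniq e heD hve)
          have hsub : insert v (G.verts (J \ {d})) ⊆ G.verts J := by
            rintro w (rfl | hw)
            · exact ⟨d, hdJ, hvd⟩
            · exact aux_verts_mono G Set.diff_subset hw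
          have hfinvJ : (G.verts J).Finite := aux_verts_finite G hJfin
          calc J.ncard = (J \ {d}).ncard + 1 := by
                rw [Set.ncard_diff_singleton_add_one hdJ hJfin]
            _ ≤ (G.verts (J \ {d})).ncard + 1 := by
                have := hIchar.2 (J \ {d}) hJ' (hJfin.diff : (J \ {d}).Finite)
                omega
            _ = (insert v (G.verts (J \ {d}))).ncard := by
                rw [Set.ncard_insert_of_notMem hv_not (aux_verts_finite G (hJfin.diff : (J \ {d}).Finite))]
            _ ≤ (G.verts J).ncard := Set.ncard_le_ncard hsub hfinvJ
        · have hJI : J ⊆ I := by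
            intro x hx
            rcases hJ hx with rfl | h
            · exact absurd hx hdJ
            · exact h
          exact hIchar.2 J hJI hJfin
    have hle : (insert d I).ncard ≤ rk M D :=
      aux_indep_ncard_le_rk hDfin
        (Set.insert_subset hdD (hID.trans Set.diff_subset)) hnew
    rw [Set.ncard_insert_of_notMem hdnotI hIfin] at hle
    have hdelrk := hdel d hdD
    omega
  refine ⟨h1, ?_, ?_⟩
  all_goals {
  -- setup finsets
  set Wf := hWfin.toFinset with hWf
  set Df := hDfin.toFinset with hDf
  set g : α → V → ℕ := fun e v =>
    (if v ∈ G.ends e ∧ ¬ (G.ends e).IsDiag then 1 else 0) +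
      (if G.ends e = Sym2.diag v then 2 else 0) with hg
  have hdeg_eq : ∀ v, G.deg D v = ∑ e ∈ Df, g e v := by
    intro v
    have e1 : {e ∈ D | v ∈ G.ends e ∧ ¬ (G.ends e).IsDiag} =
        ↑(Df.filter (fun e => v ∈ G.ends e ∧ ¬ (G.ends e).IsDiag)) := by
      ext e; simp [hDf, Set.Finite.mem_toFinset]
    have e2 : {e ∈ D | G.ends e = Sym2.diag v} =
        ↑(Df.filter (fun e => G.ends e = Sym2.diag v)) := by
      ext e; simp [hDf, Set.Finite.mem_toFinset]
    show {e ∈ D | v ∈ G.ends e ∧ ¬ (G.ends e).IsDiag}.ncard +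
        2 * {e ∈ D | G.ends e = Sym2.diag v}.ncard = _
    rw [e1, e2, Set.ncard_coe_finset, Set.ncard_coe_finset, hg]
    rw [Finset.sum_add_distrib, Finset.card_filter, Finset.card_filter,
      Finset.mul_sum]
    congr 1
    apply Finset.sum_congr rfl
    intro e _
    split <;> simp
  have hmemW : ∀ {e v}, e ∈ D → v ∈ G.ends e → v ∈ Wf := by
    intro e v heD hve
    rw [hWf, Set.Finite.mem_toFinset]
    exact ⟨e, heD, hve⟩
  have per_edge : ∀ e ∈ Df, (∑ v ∈ Wf, g e v) = 2 := by
    intro e he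
    have heD : e ∈ D := hDfin.mem_toFinset.mp he
    obtain ⟨⟨a, b⟩, hab'⟩ := Quot.exists_rep (G.ends e)
    have hab : G.ends e = s(a, b) := hab'.symm
    by_cases hd : a = b
    · subst hd
      have hpt : ∀ v, g e v = if v = a then 2 else 0 := by
        intro v
        simp only [hg]
        by_cases hva : v = a
        · subst hva
          simp [hab, Sym2.diag, Sym2.mk_isDiag_iff]
        · simp [hab, Sym2.diag, Sym2.mk_isDiag_iff, Sym2.eq_iff, hva, Ne.symm hva]
      rw [Finset.sum_congr rfl (fun v _ => hpt v), Finset.sum_ite_eq' Wf a (fun _ => 2),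
        if_pos (hmemW heD (by rw [hab]; exact Sym2.mem_mk_left a a))]
    · have hpt : ∀ v, g e v = (if v = a then 1 else 0) + (if v = b then 1 else 0) := by
        intro v
        simp only [hg]
        have hndiag : ¬ (G.ends e).IsDiag := by
          rw [hab, Sym2.mk_isDiag_iff]; exact hd
        have h2 : ¬ (G.ends e = Sym2.diag v) := by
          intro hcon
          rw [hab, Sym2.diag] at hcon
          rcases Sym2.eq_iff.mp hcon with ⟨rfl, rfl⟩ | ⟨rfl, rfl⟩ <;> exact hd rfl
        rw [if_neg h2, add_zero]
        by_cases hva : v = a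
        · subst hva
          rw [if_pos ⟨by rw [hab]; exact Sym2.mem_mk_left v b, hndiag⟩, if_pos rfl,
            if_neg hd]
        · by_cases hvb : v = b
          · subst hvb
            rw [if_pos ⟨by rw [hab]; exact Sym2.mem_mk_right a v, hndiag⟩, if_neg hva,
              if_pos rfl]
          · rw [if_neg, if_neg hva, if_neg hvb]
            rintro ⟨hmem, -⟩
            rw [hab, Sym2.mem_iff] at hmem
            tauto
      rw [Finset.sum_congr rfl (fun v _ => hpt v), Finset.sum_add_distrib,
        Finset.sum_ite_eq' Wf a (fun _ => 1), Finset.sum_ite_eq' Wf b (fun _ => 1),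
        if_pos (hmemW heD (by rw [hab]; exact Sym2.mem_mk_left a b)),
        if_pos (hmemW heD (by rw [hab]; exact Sym2.mem_mk_right a b))]
  have handshake : ∑ v ∈ Wf, G.deg D v = 2 * D.ncard := by
    calc ∑ v ∈ Wf, G.deg D v = ∑ v ∈ Wf, ∑ e ∈ Df, g e v :=
          Finset.sum_congr rfl (fun v _ => hdeg_eq v)
      _ = ∑ e ∈ Df, ∑ v ∈ Wf, g e v := Finset.sum_comm
      _ = ∑ e ∈ Df, 2 := Finset.sum_congr rfl per_edge
      _ = 2 * Df.card := by rw [Finset.sum_const, smul_eq_mul, mul_comm]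
      _ = 2 * D.ncard := by rw [hDf, Set.ncard_eq_toFinset_card D hDfin]
  have hdeg2 : ∀ v ∈ Wf, 2 ≤ G.deg D v := by
    intro v hv
    obtain ⟨e, heD, hve⟩ := hWfin.mem_toFinset.mp hv
    have hAfin : {e ∈ D | v ∈ G.ends e ∧ ¬ (G.ends e).IsDiag}.Finite :=
      hDfin.subset (fun x hx => hx.1)
    have hBfin : {e ∈ D | G.ends e = Sym2.diag v}.Finite :=
      hDfin.subset (fun x hx => hx.1)
    have hone : 1 ≤ G.deg D v := by
      show 1 ≤ {e ∈ D | v ∈ G.ends e ∧ ¬ (G.ends e).IsDiag}.ncard +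
        2 * {e ∈ D | G.ends e = Sym2.diag v}.ncard
      by_cases hdiag : (G.ends e).IsDiag
      · have : 0 < {e ∈ D | G.ends e = Sym2.diag v}.ncard :=
          (Set.ncard_pos hBfin).mpr ⟨e, heD, aux_eq_diag_of_isDiag_of_mem hdiag hve⟩
        omega
      · have : 0 < {e ∈ D | v ∈ G.ends e ∧ ¬ (G.ends e).IsDiag}.ncard :=
          (Set.ncard_pos hAfin).mpr ⟨e, heD, hve, hdiag⟩
        omega
    have := h1 v
    omega
  set Tf := Wf.filter (fun v => 3 ≤ G.deg D v) with hTfdef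
  have hsum_lower : 2 * Wf.card + Tf.card ≤ ∑ v ∈ Wf, G.deg D v := by
    rw [← Finset.sum_filter_add_sum_filter_not Wf (fun v => 3 ≤ G.deg D v)]
    have h3 : 3 * Tf.card ≤ ∑ v ∈ Tf, G.deg D v := by
      rw [mul_comm, ← Finset.sum_const_nat (m := 3) (fun x hx => rfl)]
      exact Finset.sum_le_sum (fun v hv => (Finset.mem_filter.mp hv).2)
    have h2 : 2 * (Wf.filter (fun v => ¬ 3 ≤ G.deg D v)).card ≤
        ∑ v ∈ Wf.filter (fun v => ¬ 3 ≤ G.deg D v), G.deg D v := by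
      rw [mul_comm, ← Finset.sum_const_nat (m := 2) (fun x hx => rfl)]
      exact Finset.sum_le_sum
        (fun v hv => hdeg2 v (Finset.mem_filter.mp hv).1)
    have hcards := Finset.card_filter_add_card_filter_not
      (s := Wf) (p := fun v => 3 ≤ G.deg D v)
    rw [hTfdef] at h3 ⊢
    omega
  have hrkW : rk M D ≤ (G.verts D).ncard := by
    apply aux_rk_le
    rintro n ⟨I, hID, hI, rfl⟩
    have hIfin := hDfin.subset hID
    have := ((hGM.2 I).mp hI).2 I (subset_refl I) hIfin
    exact this.trans (Set.ncard_le_ncard (aux_verts_mono G hID) hWfin)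
  have hWcard : Wf.card = (G.verts D).ncard := by
    rw [hWf, Set.ncard_eq_toFinset_card (G.verts D) hWfin]
  have hT4 : Tf.card ≤ 4 := by omega
  have hSeq : {v : V | 3 ≤ G.deg D v} = ↑Tf := by
    ext v
    simp only [Set.mem_setOf_eq, Finset.coe_filter, hTfdef, Set.mem_setOf_eq,
      Finset.mem_coe, Finset.mem_filter]
    constructor
    · intro h3
      refine ⟨?_, h3⟩
      rw [hWf, Set.Finite.mem_toFinset]
      by_contra hvW
      have hA0 : {e ∈ D | v ∈ G.ends e ∧ ¬ (G.ends e).IsDiag} = ∅ := by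
        ext e
        simp only [Set.mem_setOf_eq, Set.mem_empty_iff_false, iff_false]
        rintro ⟨heD, hve, -⟩
        exact hvW ⟨e, heD, hve⟩
      have hB0 : {e ∈ D | G.ends e = Sym2.diag v} = ∅ := by
        ext e
        simp only [Set.mem_setOf_eq, Set.mem_empty_iff_false, iff_false]
        rintro ⟨heD, hdiag⟩
        refine hvW ⟨e, heD, ?_⟩
        rw [hdiag, Sym2.diag]
        exact Sym2.mem_mk_left v v
      have : G.deg D v = 0 := by
        show {e ∈ D | v ∈ G.ends e ∧ ¬ (G.ends e).IsDiag}.ncard +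
          2 * {e ∈ D | G.ends e = Sym2.diag v}.ncard = 0
        rw [hA0, hB0]
        simp
      omega
    · exact fun h => h.2
  first
  | (rw [hSeq]; exact Tf.finite_toSet)
  | (rw [hSeq, Set.ncard_coe_finset]; exact hT4)
  }

end Paper
end

section
/- The graphic matroid M(K_4) contains no pair of clones. -/
open Set Matroid

namespace Paper

variable {α : Type*}

/-- `N` is (isomorphic to) the cycle matroid of `K₄`: the ground set is in bijection
with the edges of `K₄`, and a set is independent iff it induces a forest (every
nonempty subset has more vertices than edges). -/
def IsMK4 {β : Type*} (N : Matroid β) : Prop :=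
  ∃ g : β → Sym2 (Fin 4),
    Set.BijOn g N.E {p : Sym2 (Fin 4) | ¬ p.IsDiag} ∧
      ∀ I ⊆ N.E, (N.Indep I ↔
        ∀ J ⊆ I, J.Nonempty → J.ncard < {v : Fin 4 | ∃ e ∈ J, v ∈ g e}.ncard)

private lemma choose_tri : ∀ e' f' : Sym2 (Fin 4), ¬e'.IsDiag → ¬f'.IsDiag → e' ≠ f' →
    ∃ u v w : Fin 4, u ≠ v ∧ u ≠ w ∧ v ≠ w ∧ f' = s(u,v) ∧ e' ≠ s(u,w) ∧ e' ≠ s(v,w) := by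
  decide

private lemma key4 : ∀ (u v w : Fin 4) (p : Sym2 (Fin 4)), u ≠ v → u ≠ w → v ≠ w → ¬p.IsDiag →
    p ≠ s(u,v) → p ≠ s(u,w) → p ≠ s(v,w) →
    ∀ x : Fin 4, x ∈ p ∨ x ∈ s(u,w) ∨ x ∈ s(v,w) := by decide

set_option synthInstance.maxSize 1024 in
set_option synthInstance.maxHeartbeats 400000 in
private lemma key3 : ∀ p q : Sym2 (Fin 4), ¬p.IsDiag → ¬q.IsDiag → p ≠ q →
    ∃ x y z : Fin 4, x ≠ y ∧ x ≠ z ∧ y ≠ z ∧ (x ∈ p ∨ x ∈ q) ∧ (y ∈ p ∨ y ∈ q) ∧ (z ∈ p ∨ z ∈ q) := by decide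

private lemma key2 : ∀ p : Sym2 (Fin 4), ¬p.IsDiag → ∃ x y : Fin 4, x ≠ y ∧ x ∈ p ∧ y ∈ p := by decide

private lemma keytri : ∀ (u v w x : Fin 4),
    (x ∈ s(u,v) ∨ x ∈ s(u,w) ∨ x ∈ s(v,w)) → x = u ∨ x = v ∨ x = w := by decide

private lemma keydistinct : ∀ u v w : Fin 4, u ≠ v → u ≠ w → v ≠ w →
    s(u,w) ≠ s(v,w) ∧ s(u,v) ≠ s(u,w) ∧ s(u,v) ≠ s(v,w) ∧ ¬(s(u,w)).IsDiag ∧ ¬(s(v,w)).IsDiag := by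
  decide

private lemma card_gt1 (p : Sym2 (Fin 4)) (hp : ¬p.IsDiag) (V : Set (Fin 4))
    (hV : ∀ x, x ∈ p → x ∈ V) : 1 < V.ncard := by
  obtain ⟨x, y, hxy, hx, hy⟩ := key2 p hp
  have hsub : {x, y} ⊆ V := by
    rintro z (rfl | rfl)
    · exact hV _ hx
    · exact hV _ hy
  have h2 : ({x, y} : Set (Fin 4)).ncard = 2 := Set.ncard_pair hxy
  have := Set.ncard_le_ncard hsub V.toFinite
  omega

private lemma card_gt2 (p q : Sym2 (Fin 4)) (hp : ¬p.IsDiag) (hq : ¬q.IsDiag) (hpq : p ≠ q)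
    (V : Set (Fin 4)) (hV : ∀ x, (x ∈ p ∨ x ∈ q) → x ∈ V) : 2 < V.ncard := by
  obtain ⟨x, y, z, hxy, hxz, hyz, hx, hy, hz⟩ := key3 p q hp hq hpq
  have hsub : {x, y, z} ⊆ V := by
    rintro t (rfl | rfl | rfl)
    · exact hV _ hx
    · exact hV _ hy
    · exact hV _ hz
  have h3 : ({x, y, z} : Set (Fin 4)).ncard = 3 :=
    Set.ncard_eq_three.mpr ⟨x, y, z, hxy, hxz, hyz, rfl⟩
  have := Set.ncard_le_ncard hsub V.toFinite
  omega

private lemma card_gt3 (u v w : Fin 4) (p : Sym2 (Fin 4)) (huv : u ≠ v) (huw : u ≠ w)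
    (hvw : v ≠ w) (hp : ¬p.IsDiag) (h1 : p ≠ s(u,v)) (h2 : p ≠ s(u,w)) (h3 : p ≠ s(v,w))
    (V : Set (Fin 4)) (hV : ∀ x, (x ∈ p ∨ x ∈ s(u,w) ∨ x ∈ s(v,w)) → x ∈ V) : 3 < V.ncard := by
  have huniv : V = Set.univ := Set.eq_univ_of_forall fun x =>
    hV x (key4 u v w p huv huw hvw hp h1 h2 h3 x)
  rw [huniv, Set.ncard_univ, Nat.card_eq_fintype_card, Fintype.card_fin]
  omega

/-- `M(K₄)` contains no pair of clones. -/
theorem MK4_no_clones {β : Type*} (N : Matroid β) (hN : IsMK4 N) :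
    ¬ ∃ e f, e ≠ f ∧ Clones N e f := by
  rintro ⟨e, f, hef, he, hf, hcl⟩
  obtain ⟨g, hbij, hind⟩ := hN
  have he' : ¬(g e).IsDiag := hbij.mapsTo he
  have hf' : ¬(g f).IsDiag := hbij.mapsTo hf
  have hgef : g e ≠ g f := fun h => hef (hbij.injOn he hf h)
  obtain ⟨u, v, w, huv, huw, hvw, hfuv, heuw, hevw⟩ := choose_tri (g e) (g f) he' hf' hgef
  obtain ⟨hABne, hFA, hFB, hAnd, hBnd⟩ := keydistinct u v w huv huw hvw
  obtain ⟨a, ha, hga⟩ := hbij.surjOn (show s(u,w) ∈ {p : Sym2 (Fin 4) | ¬p.IsDiag} from hAnd)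
  obtain ⟨b, hb, hgb⟩ := hbij.surjOn (show s(v,w) ∈ {p : Sym2 (Fin 4) | ¬p.IsDiag} from hBnd)
  -- distinctness of e, f, a, b
  have hea : e ≠ a := fun h => heuw (by rw [h, hga])
  have heb : e ≠ b := fun h => hevw (by rw [h, hgb])
  have hfa : f ≠ a := fun h => hFA (by rw [← hfuv, h, hga])
  have hfb : f ≠ b := fun h => hFB (by rw [← hfuv, h, hgb])
  have hab : a ≠ b := fun h => hABne (by rw [← hga, h, hgb])
  have hIE : ({e, a, b} : Set β) ⊆ N.E := by
    rintro x (rfl | rfl | rfl) <;> assumption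
  have hFE : ({f, a, b} : Set β) ⊆ N.E := by
    rintro x (rfl | rfl | rfl) <;> assumption
  -- {e, a, b} is independent
  have hI : N.Indep {e, a, b} := by
    rw [hind _ hIE]
    intro J hJ hJne
    by_cases heJ : e ∈ J <;> by_cases haJ : a ∈ J <;> by_cases hbJ : b ∈ J
    · -- J = {e, a, b}
      have hJeq : J = {e, a, b} := by
        apply Subset.antisymm hJ
        rintro x (rfl | rfl | rfl) <;> assumption
      subst hJeq
      have hcard : ({e, a, b} : Set β).ncard = 3 :=
        Set.ncard_eq_three.mpr ⟨e, a, b, hea, heb, hab, rfl⟩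
      rw [hcard]
      apply card_gt3 u v w (g e) huv huw hvw he' (hfuv ▸ hgef) heuw hevw
      rintro x (hx | hx | hx)
      · exact ⟨e, by simp, hx⟩
      · exact ⟨a, by simp, by rw [hga]; exact hx⟩
      · exact ⟨b, by simp, by rw [hgb]; exact hx⟩
    · -- J = {e, a}
      have hJeq : J = {e, a} := by
        apply Subset.antisymm
        · intro x hx
          rcases hJ hx with rfl | rfl | rfl
          · exact Or.inl rfl
          · exact Or.inr rfl
          · exact absurd hx hbJ
        · rintro x (rfl | rfl) <;> assumption
      subst hJeq
      rw [Set.ncard_pair hea]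
      apply card_gt2 (g e) (g a) he' (hga ▸ hAnd) (by rw [hga]; exact heuw)
      rintro x (hx | hx)
      · exact ⟨e, by simp, hx⟩
      · exact ⟨a, by simp, hx⟩
    · -- J = {e, b}
      have hJeq : J = {e, b} := by
        apply Subset.antisymm
        · intro x hx
          rcases hJ hx with rfl | rfl | rfl
          · exact Or.inl rfl
          · exact absurd hx haJ
          · exact Or.inr rfl
        · rintro x (rfl | rfl) <;> assumption
      subst hJeq
      rw [Set.ncard_pair heb]
      apply card_gt2 (g e) (g b) he' (hgb ▸ hBnd) (by rw [hgb]; exact hevw)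
      rintro x (hx | hx)
      · exact ⟨e, by simp, hx⟩
      · exact ⟨b, by simp, hx⟩
    · -- J = {e}
      have hJeq : J = {e} := by
        apply Subset.antisymm
        · intro x hx
          rcases hJ hx with rfl | rfl | rfl
          · rfl
          · exact absurd hx haJ
          · exact absurd hx hbJ
        · rintro x rfl; assumption
      subst hJeq
      rw [Set.ncard_singleton]
      apply card_gt1 (g e) he'
      exact fun x hx => ⟨e, rfl, hx⟩
    · -- J = {a, b}
      have hJeq : J = {a, b} := by
        apply Subset.antisymm
        · intro x hx
          rcases hJ hx with rfl | rfl | rfl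
          · exact absurd hx heJ
          · exact Or.inl rfl
          · exact Or.inr rfl
        · rintro x (rfl | rfl) <;> assumption
      subst hJeq
      rw [Set.ncard_pair hab]
      apply card_gt2 (g a) (g b) (hga ▸ hAnd) (hgb ▸ hBnd) (by rw [hga, hgb]; exact hABne)
      rintro x (hx | hx)
      · exact ⟨a, by simp, hx⟩
      · exact ⟨b, by simp, hx⟩
    · -- J = {a}
      have hJeq : J = {a} := by
        apply Subset.antisymm
        · intro x hx
          rcases hJ hx with rfl | rfl | rfl
          · exact absurd hx heJ
          · rfl
          · exact absurd hx hbJ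
        · rintro x rfl; assumption
      subst hJeq
      rw [Set.ncard_singleton]
      apply card_gt1 (g a) (hga ▸ hAnd)
      exact fun x hx => ⟨a, rfl, hx⟩
    · -- J = {b}
      have hJeq : J = {b} := by
        apply Subset.antisymm
        · intro x hx
          rcases hJ hx with rfl | rfl | rfl
          · exact absurd hx heJ
          · exact absurd hx haJ
          · rfl
        · rintro x rfl; assumption
      subst hJeq
      rw [Set.ncard_singleton]
      apply card_gt1 (g b) (hgb ▸ hBnd)
      exact fun x hx => ⟨b, rfl, hx⟩
    · -- J empty: contradiction
      obtain ⟨x, hx⟩ := hJne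
      rcases hJ hx with rfl | rfl | rfl
      · exact absurd hx heJ
      · exact absurd hx haJ
      · exact absurd hx hbJ
  -- {f, a, b} is dependent
  have hdep : ¬ N.Indep {f, a, b} := by
    intro h
    have hlt := ((hind _ hFE).mp h) {f, a, b} Subset.rfl ⟨f, by simp⟩
    have hcard : ({f, a, b} : Set β).ncard = 3 :=
      Set.ncard_eq_three.mpr ⟨f, a, b, hfa, hfb, hab, rfl⟩
    rw [hcard] at hlt
    have hsub : {x : Fin 4 | ∃ p ∈ ({f, a, b} : Set β), x ∈ g p} ⊆ {u, v, w} := by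
      rintro x ⟨p, hp, hxp⟩
      rcases hp with rfl | rfl | rfl
      · rcases keytri u v w x (Or.inl (hfuv ▸ hxp)) with rfl | rfl | rfl <;> simp
      · rcases keytri u v w x (Or.inr (Or.inl (hga ▸ hxp))) with rfl | rfl | rfl <;> simp
      · rcases keytri u v w x (Or.inr (Or.inr (hgb ▸ hxp))) with rfl | rfl | rfl <;> simp
    have h1 : ({u, v, w} : Set (Fin 4)).ncard ≤ 3 := by
      have h2 := Set.ncard_insert_le u ({v, w} : Set (Fin 4))
      have h3 := Set.ncard_insert_le v ({w} : Set (Fin 4))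
      rw [Set.ncard_singleton] at h3
      omega
    have h4 := Set.ncard_le_ncard hsub (Set.toFinite _)
    omega
  -- the swap maps {e, a, b} to {f, a, b}
  have himg : swapMap e f '' {e, a, b} = {f, a, b} := by
    rw [show ({e, a, b} : Set β) = insert e (insert a {b}) from rfl, Set.image_insert_eq,
      Set.image_insert_eq, Set.image_singleton]
    have h1 : swapMap e f e = f := by simp [swapMap]
    have h2 : swapMap e f a = a := by simp [swapMap, hea.symm, hfa.symm]
    have h3 : swapMap e f b = b := by simp [swapMap, heb.symm, hfb.symm]
    rw [h1, h2, h3]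
  exact hdep (himg ▸ (hcl {e, a, b}).mp hI)


end Paper
end

section
/- If e and f are clones in a cosimple matroid M, then M contains circuits C_1 and C_2 with |C_1 △ C_2| = 2; consequently M has a double circuit with at least two singular classes. -/
open Set Matroid

namespace Paper

variable {α : Type*}

section Aux

variable {M : Matroid α} {C X I J : Set α} {e f x : α}

lemma IsCircuit.subset_ground (h : IsCircuit M C) : C ⊆ M.E := h.1.2

lemma exists_circuit_subset' (M : Matroid α) :
    ∀ n (X : Set α), X.Finite → X.ncard ≤ n → M.Dep X → ∃ C, C ⊆ X ∧ IsCircuit M C := by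
  intro n
  induction n with
  | zero =>
    intro X hfin hcard hdep
    rw [Nat.le_zero, Set.ncard_eq_zero hfin] at hcard
    exact absurd (hcard ▸ M.empty_indep) hdep.not_indep
  | succ n ih =>
    intro X hfin hcard hdep
    by_cases h : ∀ x ∈ X, M.Indep (X \ {x})
    · exact ⟨X, Subset.rfl, hdep, h⟩
    · push_neg at h
      obtain ⟨x, hx, hnind⟩ := h
      have hdep' : M.Dep (X \ {x}) := ⟨hnind, diff_subset.trans hdep.2⟩
      have hlt : (X \ {x}).ncard < X.ncard := Set.ncard_diff_singleton_lt_of_mem hx hfin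
      obtain ⟨C, hC1, hC2⟩ := ih (X \ {x}) (hfin.diff) (by omega) hdep'
      exact ⟨C, hC1.trans diff_subset, hC2⟩

lemma exists_circuit_subset (hdep : M.Dep X) (hfin : X.Finite) :
    ∃ C, C ⊆ X ∧ IsCircuit M C :=
  exists_circuit_subset' M X.ncard X hfin le_rfl hdep

lemma IsCircuit.mem_closure_diff (h : IsCircuit M C) (hx : x ∈ C) :
    x ∈ M.closure (C \ {x}) := by
  have hi := h.2 x hx
  have hd : M.Dep (insert x (C \ {x})) := by
    rw [insert_diff_singleton, insert_eq_of_mem hx]; exact h.1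
  exact (hi.insert_dep_iff.1 hd).1

lemma IsCircuit.closure_diff (h : IsCircuit M C) (hx : x ∈ C) :
    M.closure C = M.closure (C \ {x}) := by
  have h2 := closure_insert_eq_of_mem_closure (h.mem_closure_diff hx)
  rwa [insert_diff_singleton, insert_eq_of_mem hx] at h2

lemma rk_eq_ncard_of_basis [M.Finite] (hI : M.IsBasis I X) : rk M X = I.ncard := by
  have hXfin : X.Finite := M.ground_finite.subset hI.subset_ground
  apply IsGreatest.csSup_eq
  constructor
  · exact ⟨I, hI.subset, hI.indep, rfl⟩
  · rintro n ⟨J, hJX, hJ, rfl⟩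
    obtain ⟨I', hI', hJI'⟩ := hJ.subset_isBasis_of_subset hJX hI.subset_ground
    have h1 : I'.ncard = I.ncard :=
      hI'.restrict_isBase.ncard_eq_ncard_of_isBase hI.restrict_isBase
    exact (Set.ncard_le_ncard hJI' (hXfin.subset hI'.subset)).trans h1.le

lemma swapMap_left (e f : α) : swapMap e f e = f := by simp [swapMap]

lemma swapMap_involutive (e f : α) : Function.Involutive (swapMap e f) := by
  intro x
  unfold swapMap
  by_cases h1 : x = e <;> by_cases h2 : x = f <;> simp_all

lemma swapMap_other (hx : x ≠ e) (hx' : x ≠ f) : swapMap e f x = x := by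
  simp [swapMap, hx, hx']

lemma swap_image_eq (hef : e ≠ f) (heC : e ∈ C) (hfC : f ∉ C) :
    swapMap e f '' C = insert f (C \ {e}) := by
  ext y
  simp only [mem_image, mem_insert_iff, mem_diff, mem_singleton_iff]
  constructor
  · rintro ⟨x, hx, rfl⟩
    by_cases hxe : x = e
    · subst hxe; exact Or.inl (swapMap_left _ _)
    · have hxf : x ≠ f := fun h => hfC (h ▸ hx)
      rw [swapMap_other hxe hxf]
      exact Or.inr ⟨hx, hxe⟩
  · rintro (rfl | ⟨hy, hye⟩)
    · exact ⟨e, heC, swapMap_left _ _⟩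
    · have hyf : y ≠ f := fun h => hfC (h ▸ hy)
      exact ⟨y, hy, swapMap_other hye hyf⟩

lemma clones_image_circuit (hcl : Clones M e f) (hC : IsCircuit M C) :
    IsCircuit M (swapMap e f '' C) := by
  obtain ⟨he, hf, hind⟩ := hcl
  have hsub : swapMap e f '' C ⊆ M.E := by
    rintro _ ⟨x, hx, rfl⟩
    unfold swapMap
    split_ifs
    exacts [hf, he, hC.subset_ground hx]
  refine ⟨⟨fun h => hC.1.not_indep ((hind C).mpr h), hsub⟩, ?_⟩
  rintro _ ⟨x, hx, rfl⟩
  have himg : (swapMap e f '' C) \ {swapMap e f x} = swapMap e f '' (C \ {x}) := by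
    rw [Set.image_diff (swapMap_involutive e f).injective, Set.image_singleton]
  rw [himg]
  exact (hind _).mp (hC.2 x hx)

end Aux

/-- if `e` and `f` are clones in a cosimple matroid `M`, then `M` has two
circuits with symmetric difference of size two, and hence a double circuit with at
least two singular classes. -/
theorem clones_in_cosimple_give_close_circuits {α : Type*} (M : Matroid α) [M.Finite]
    (hcos : SimpleM M✶) (e f : α) (hef : e ≠ f) (hclones : Clones M e f) :
    (∃ C₁ C₂, IsCircuit M C₁ ∧ IsCircuit M C₂ ∧ (symmDiff C₁ C₂).ncard = 2) ∧
      ∃ D P, DoubleCircuit M D ∧ IsCircuitPartition M D P ∧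
        2 ≤ {p ∈ P | p.ncard = 1}.ncard := by
  classical
  have heE : e ∈ M.E := hclones.1
  have hfE : f ∈ M.E := hclones.2.1
  have hEfin : M.E.Finite := M.ground_finite
  -- find a circuit `C` with `e ∈ C` and `f ∉ C`
  have hco : M.Coindep {e, f} :=
    coindep_def.mpr (hcos.2 e f (by simpa using heE) (by simpa using hfE) hef)
  have hspan : M.Spanning (M.E \ {e, f}) := hco.compl_spanning
  obtain ⟨I, hI⟩ := M.exists_isBasis (M.E \ {e, f}) diff_subset
  have hecl : e ∈ M.closure I := by
    rw [hI.closure_eq_closure, hspan.closure_eq_of_superset Subset.rfl]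
    exact heE
  have heI : e ∉ I := fun h => (hI.subset h).2 (by simp)
  have hdep : M.Dep (insert e I) := hI.indep.insert_dep_iff.mpr ⟨hecl, heI⟩
  obtain ⟨C, hCsub, hC⟩ := exists_circuit_subset hdep (hEfin.subset hdep.subset_ground)
  have heC : e ∈ C := by
    by_contra h
    refine hC.1.not_indep (hI.indep.subset fun x hx => ?_)
    rcases hCsub hx with rfl | hxI
    · exact absurd hx h
    · exact hxI
  have hfC : f ∉ C := by
    intro h
    rcases hCsub h with h1 | h2
    · exact hef h1.symm
    · exact (hI.subset h2).2 (by simp)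
  have hCE : C ⊆ M.E := hC.subset_ground
  have hCfin : C.Finite := hEfin.subset hCE
  have hCcard : 1 ≤ C.ncard := (Set.ncard_pos hCfin).mpr ⟨e, heC⟩
  -- the second circuit
  have hC₂ : IsCircuit M (insert f (C \ {e})) := by
    rw [← swap_image_eq hef heC hfC]
    exact clones_image_circuit hclones hC
  have heC₂ : e ∉ insert f (C \ {e}) := by simp [hef]
  -- the symmetric difference
  have hsd : symmDiff C (insert f (C \ {e})) = ({e, f} : Set α) := by
    ext x
    simp only [symmDiff_def, sup_eq_union, mem_union, mem_diff, mem_insert_iff,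
      mem_singleton_iff, not_or, not_and, not_not]
    constructor
    · rintro (⟨hxC, hxf, hxe⟩ | ⟨hx, hxC⟩)
      · exact Or.inl (hxe hxC)
      · rcases hx with rfl | ⟨hc, _⟩
        · exact Or.inr rfl
        · exact absurd hc hxC
    · rintro (rfl | rfl)
      · exact Or.inl ⟨heC, hef, fun _ => rfl⟩
      · exact Or.inr ⟨Or.inl rfl, hfC⟩
  refine ⟨⟨C, insert f (C \ {e}), hC, hC₂, by rw [hsd]; exact Set.ncard_pair hef⟩, ?_⟩
  -- the double circuit and its partition
  have hDE : insert f C ⊆ M.E := insert_subset hfE hCE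
  have hDfin : (insert f C).Finite := hEfin.subset hDE
  have hDcard : (insert f C).ncard = C.ncard + 1 := Set.ncard_insert_of_notMem hfC hCfin
  have hfclB : f ∈ M.closure (C \ {e}) :=
    ((hC.2 e heC).insert_dep_iff.1 hC₂.1).1
  have hfcl : ∀ x ∈ C, f ∈ M.closure (C \ {x}) := by
    intro x hx
    rw [← hC.closure_diff hx, hC.closure_diff heC]
    exact hfclB
  have hDbasis : M.IsBasis (C \ {e}) (insert f C) := by
    rw [isBasis_iff_indep_subset_closure]
    refine ⟨hC.2 e heC, diff_subset.trans (subset_insert _ _),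
      insert_subset (hfcl e heC) ?_⟩
    rw [← hC.closure_diff heC]
    exact M.subset_closure C hCE
  have hrkD : rk M (insert f C) = C.ncard - 1 := by
    rw [rk_eq_ncard_of_basis hDbasis, Set.ncard_diff_singleton_of_mem heC]
  have hbasisd : ∀ d ∈ insert f C, ∃ B, M.IsBasis B (insert f C \ {d}) ∧
      B.ncard = C.ncard - 1 := by
    intro d hd
    by_cases hdf : d = f
    · refine ⟨C \ {e}, ?_, Set.ncard_diff_singleton_of_mem heC⟩
      rw [hdf, insert_diff_self_of_notMem hfC, isBasis_iff_indep_subset_closure]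
      exact ⟨hC.2 e heC, diff_subset, (hC.closure_diff heC) ▸ M.subset_closure C hCE⟩
    · have hdC : d ∈ C := (mem_insert_iff.mp hd).resolve_left hdf
      refine ⟨C \ {d}, ?_, Set.ncard_diff_singleton_of_mem hdC⟩
      rw [← insert_diff_singleton_comm (Ne.symm hdf) C, isBasis_iff_indep_subset_closure]
      exact ⟨hC.2 d hdC, subset_insert _ _,
        insert_subset (hfcl d hdC) (M.subset_closure _ (diff_subset.trans hCE))⟩
  have hDdcard : ∀ d ∈ insert f C, (insert f C \ {d}).ncard = C.ncard := by
    intro d hd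
    rw [Set.ncard_diff_singleton_of_mem hd, hDcard]
    omega
  have hrkDd : ∀ d ∈ insert f C, rk M (insert f C \ {d}) = rk M (insert f C) := by
    intro d hd
    obtain ⟨B, hB, hBcard⟩ := hbasisd d hd
    rw [rk_eq_ncard_of_basis hB, hBcard, hrkD]
  have hDC : DoubleCircuit M (insert f C) :=
    ⟨hDE, hDfin, by rw [hrkD, hDcard]; omega, hrkDd⟩
  -- no two distinct circuits avoid the same element of `D`
  have key : ∀ d ∈ insert f C, ∀ C' C'', IsCircuit M C' → IsCircuit M C'' →
      C' ⊆ insert f C \ {d} → C'' ⊆ insert f C \ {d} → C' = C'' := by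
    intro d hd C' C'' hC' hC'' hsub' hsub''
    by_contra hne
    have hC'fin : C'.Finite := hDfin.subset (hsub'.trans diff_subset)
    have hC''fin : C''.Finite := hDfin.subset (hsub''.trans diff_subset)
    have hUfin : (C' ∪ C'').Finite := hC'fin.union hC''fin
    have hdiff : ∀ A B : Set α, IsCircuit M A → IsCircuit M B → A ≠ B →
        (A \ B).Nonempty := by
      intro A B hA hB hAB
      rw [Set.nonempty_iff_ne_empty]
      intro h
      have hss : A ⊆ B := diff_eq_empty.mp h
      obtain ⟨y, hyB, hyA⟩ := exists_of_ssubset (hss.ssubset_of_ne hAB)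
      exact hA.1.not_indep ((hB.2 y hyB).subset (subset_diff_singleton hss hyA))
    obtain ⟨x, hxC', hxC''⟩ := hdiff C' C'' hC' hC'' hne
    have hintind : M.Indep (C' ∩ C'') :=
      (hC'.2 x hxC').subset (subset_diff_singleton inter_subset_left fun h => hxC'' h.2)
    have hUE : C' ∪ C'' ⊆ M.E := union_subset hC'.subset_ground hC''.subset_ground
    obtain ⟨K₀, hK₀, hintK₀⟩ := hintind.subset_isBasis_of_subset
      (inter_subset_left.trans subset_union_left) hUE
    have hK₀fin : K₀.Finite := hUfin.subset hK₀.subset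
    have hKC' : (K₀ ∩ C').ncard < C'.ncard := by
      refine Set.ncard_lt_ncard (inter_subset_right.ssubset_of_ne fun h => ?_) hC'fin
      exact hC'.1.not_indep (hK₀.indep.subset (h ▸ inter_subset_left))
    have hKC'' : (K₀ ∩ C'').ncard < C''.ncard := by
      refine Set.ncard_lt_ncard (inter_subset_right.ssubset_of_ne fun h => ?_) hC''fin
      exact hC''.1.not_indep (hK₀.indep.subset (h ▸ inter_subset_left))
    have hsplit : (K₀ ∩ C') ∪ (K₀ ∩ C'') = K₀ := by
      rw [← inter_union_distrib_left, inter_eq_self_of_subset_left hK₀.subset]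
    have hintK : (K₀ ∩ C') ∩ (K₀ ∩ C'') = C' ∩ C'' := by
      rw [inter_inter_inter_comm, inter_self]
      exact inter_eq_self_of_subset_right hintK₀
    have hie := Set.ncard_union_add_ncard_inter (K₀ ∩ C') (K₀ ∩ C'')
      (hK₀fin.subset inter_subset_left) (hK₀fin.subset inter_subset_left)
    rw [hsplit, hintK] at hie
    have hieU := Set.ncard_union_add_ncard_inter C' C'' hC'fin hC''fin
    -- extend K₀ to a basis K₁ of D \ {d}
    obtain ⟨B, hB, hBcard⟩ := hbasisd d hd
    obtain ⟨K₁, hK₁, hK₀K₁⟩ := hK₀.indep.subset_isBasis_of_subset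
      (hK₀.subset.trans (union_subset hsub' hsub'')) (diff_subset.trans hDE)
    have hK₁card : K₁.ncard = C.ncard - 1 :=
      (hK₁.restrict_isBase.ncard_eq_ncard_of_isBase hB.restrict_isBase).trans hBcard
    have hK₁U : K₁ ∩ (C' ∪ C'') = K₀ :=
      (hK₀.eq_of_subset_indep (hK₁.indep.inter_right _)
        (subset_inter hK₀K₁ hK₀.subset) inter_subset_right).symm
    have hUD : C' ∪ C'' ⊆ insert f C \ {d} := union_subset hsub' hsub''
    have hdiffK : ((insert f C \ {d}) \ K₁).ncard = (insert f C \ {d}).ncard - K₁.ncard :=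
      Set.ncard_diff hK₁.subset ((hDfin.diff).subset hK₁.subset)
    have h1 : ((C' ∪ C'') \ K₁).ncard ≤ ((insert f C \ {d}) \ K₁).ncard :=
      Set.ncard_le_ncard (diff_subset_diff_left hUD) ((hDfin.diff).diff)
    have h2 := Set.ncard_inter_add_ncard_diff_eq_ncard (C' ∪ C'') K₁ hUfin
    rw [inter_comm, hK₁U] at h2
    have hDd := hDdcard d hd
    omega
  -- every `d ∈ D` is avoided by some circuit in `D`
  have hcircd : ∀ d ∈ insert f C, ∃ C₃, C₃ ⊆ insert f C \ {d} ∧ IsCircuit M C₃ := by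
    intro d hd
    obtain ⟨B, hB, hBcard⟩ := hbasisd d hd
    have hdep : M.Dep (insert f C \ {d}) := by
      rw [← not_indep_iff (diff_subset.trans hDE)]
      intro hind
      have hBeq : B = insert f C \ {d} := hB.eq_of_subset_indep hind hB.subset Subset.rfl
      have hDd := hDdcard d hd
      rw [hBeq, hDd] at hBcard
      omega
    exact exists_circuit_subset hdep (hDfin.diff)
  -- the circuit partition
  refine ⟨insert f C, {p | ∃ C', IsCircuit M C' ∧ C' ⊆ insert f C ∧ p = insert f C \ C'},
    hDC, ⟨?_, ?_, ?_, ?_⟩, ?_⟩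
  · -- nonempty classes
    rintro p ⟨C', hC', hC'D, rfl⟩
    rw [Set.nonempty_iff_ne_empty]
    intro h
    have hDC' : insert f C ⊆ C' := diff_eq_empty.mp h
    have hfC' : f ∈ C' := hDC' (mem_insert _ _)
    exact hC.1.not_indep ((hC'.2 f hfC').subset
      (subset_diff_singleton ((subset_insert f C).trans hDC') hfC))
  · rintro p ⟨C', _, _, rfl⟩
    exact diff_subset
  · -- exactly one class containing each element
    intro d hd
    obtain ⟨C₃, hC₃sub, hC₃⟩ := hcircd d hd
    refine ⟨insert f C \ C₃, ⟨⟨C₃, hC₃, hC₃sub.trans diff_subset, rfl⟩,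
      hd, fun h => (hC₃sub h).2 rfl⟩, ?_⟩
    rintro q ⟨⟨C₄, hC₄, hC₄D, rfl⟩, hdq⟩
    rw [key d hd C₄ C₃ hC₄ hC₃ (subset_diff_singleton hC₄D hdq.2) hC₃sub]
  · -- the circuits in `D` are the complements of the classes
    intro C₅
    constructor
    · rintro ⟨hC₅, hC₅D⟩
      exact ⟨insert f C \ C₅, ⟨C₅, hC₅, hC₅D, rfl⟩, (diff_diff_cancel_left hC₅D).symm⟩
    · rintro ⟨p, ⟨C₆, hC₆, hC₆D, rfl⟩, rfl⟩
      rw [diff_diff_cancel_left hC₆D]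
      exact ⟨hC₆, hC₆D⟩
  · -- at least two singular classes
    have hfP : ({f} : Set α) ∈ {p | ∃ C', IsCircuit M C' ∧ C' ⊆ insert f C ∧
        p = insert f C \ C'} := by
      refine ⟨C, hC, subset_insert _ _, ?_⟩
      ext x
      constructor
      · rintro rfl
        exact ⟨mem_insert _ _, hfC⟩
      · rintro ⟨h1, h2⟩
        rcases mem_insert_iff.mp h1 with rfl | h1
        · exact mem_singleton _
        · exact absurd h1 h2
    have heP : ({e} : Set α) ∈ {p | ∃ C', IsCircuit M C' ∧ C' ⊆ insert f C ∧
        p = insert f C \ C'} := by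
      refine ⟨insert f (C \ {e}), hC₂,
        insert_subset (mem_insert _ _) (diff_subset.trans (subset_insert _ _)), ?_⟩
      ext x
      constructor
      · rintro rfl
        exact ⟨mem_insert_iff.mpr (Or.inr heC), heC₂⟩
      · rintro ⟨h1, h2⟩
        rcases mem_insert_iff.mp h1 with rfl | h1
        · exact absurd (mem_insert _ _) h2
        · show x = e
          by_contra hne
          exact h2 (mem_insert_iff.mpr (Or.inr ⟨h1, hne⟩))
    have hPfin : {p | ∃ C', IsCircuit M C' ∧ C' ⊆ insert f C ∧
        p = insert f C \ C'}.Finite := by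
      refine hDfin.finite_subsets.subset ?_
      rintro p ⟨C', _, _, rfl⟩
      exact diff_subset
    have hsub2 : ({{e}, {f}} : Set (Set α)) ⊆
        {p ∈ {p | ∃ C', IsCircuit M C' ∧ C' ⊆ insert f C ∧ p = insert f C \ C'} |
          p.ncard = 1} := by
      rintro p (rfl | rfl)
      · exact ⟨heP, Set.ncard_singleton e⟩
      · exact ⟨hfP, Set.ncard_singleton f⟩
    have h2 : ({{e}, {f}} : Set (Set α)).ncard = 2 :=
      Set.ncard_pair (fun h => hef (Set.singleton_eq_singleton_iff.mp h))
    rw [← h2]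
    exact Set.ncard_le_ncard hsub2 (hPfin.subset (sep_subset _ _))

end Paper
end
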